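/- Let C ∈ (ℚ[t])⟦q⟧ be the formal power series whose coefficient of qⁿ tᵏ is the number of level one cheesy polyominoes with area n whose last column has height k. Let C₁ = C(q,1) ∈ ℚ⟦q⟧ and D₁ = (∂C/∂t)(q,1) ∈ ℚ⟦q⟧. Then the following identity holds in (ℚ[t])⟦q⟧: (1 − qt)² · C = qt(1 − qt) + qt · C₁ + qt(1 − qt) · D₁ + q²t³ · (D₁ − C₁) (equivalently, C = qt/(1−qt) + qt/(1−qt)² · C₁ + qt/(1−qt) · D₁ + q²t³/(1−qt)² · (D₁ − C₁)). -/

import Mathlib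

open Finset Filter

noncomputable section

/-- A cell of the hexagonal lattice, modelled as a point of ℤ². -/
abbrev Cell : Type := ℤ × ℤ

/-- Hexagonal adjacency on ℤ². -/
def HexAdj (a b : Cell) : Prop :=
  (b.1 - a.1, b.2 - a.2) ∈
    ({(1,0), (-1,0), (0,1), (0,-1), (1,1), (-1,-1)} : Set (ℤ × ℤ))

/-- A (hexagonal-celled) polyomino: a finite nonempty set of cells,
connected under hexagonal adjacency. -/
def IsPolyomino (P : Finset Cell) : Prop :=
  P.Nonempty ∧ ∀ a ∈ P, ∀ b ∈ P,
    Relation.ReflTransGen (fun u v : Cell => u ∈ P ∧ v ∈ P ∧ HexAdj u v) a b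

/-- The canonical representative of a translation class: both the minimal
abscissa and the minimal ordinate are `0`. -/
def Normalized (P : Finset Cell) : Prop :=
  (∀ c ∈ P, 0 ≤ c.1 ∧ 0 ≤ c.2) ∧ (∃ c ∈ P, c.1 = 0) ∧ (∃ c ∈ P, c.2 = 0)

/-- Ordinates of the cells of the column of `P` at abscissa `x`. -/
def columnYs (P : Finset Cell) (x : ℤ) : Finset ℤ :=
  (P.filter (fun c => c.1 = x)).image Prod.snd

/-- Number of connected components (maximal runs of consecutive integers) of a
finite set of integers: each component is counted via its least element. -/
def numComponents (s : Finset ℤ) : ℕ := (s.filter (fun a => a - 1 ∉ s)).card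

/-- Every nonempty column has exactly one connected component. -/
def ColumnConvex (P : Finset Cell) : Prop :=
  ∀ x : ℤ, (columnYs P x).Nonempty → numComponents (columnYs P x) = 1

/-- `a` and `b` lie in the same connected component of `s`. -/
def SameComp (s : Finset ℤ) (a b : ℤ) : Prop :=
  a ∈ s ∧ b ∈ s ∧ ∀ c : ℤ, min a b ≤ c → c ≤ max a b → c ∈ s

/-- The leftmost nonempty column has exactly one connected component and, for
every pair of nonempty columns at consecutive abscissas `x`, `x+1`, every
connected component of the column at `x+1` contains a cell adjacent to some
cell of the column at `x`. -/
def RightwardSemiDirected (P : Finset Cell) : Prop :=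
  (∀ x : ℤ, (columnYs P x).Nonempty → (∀ x' : ℤ, x' < x → columnYs P x' = ∅) →
      numComponents (columnYs P x) = 1) ∧
  (∀ x : ℤ, (columnYs P x).Nonempty → (columnYs P (x+1)).Nonempty →
      ∀ b ∈ columnYs P (x+1), ∃ b' ∈ columnYs P (x+1),
        SameComp (columnYs P (x+1)) b b' ∧
        ∃ c ∈ columnYs P x, HexAdj (x, c) (x+1, b'))

/-- The cells of the gap(s) of a column: the integers between the least and the
greatest element that do not belong to the column. -/
def gapCells (s : Finset ℤ) : Finset ℤ :=
  Finset.Icc (WithTop.untopD 0 s.min) (WithBot.unbotD 0 s.max) \ s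

def gapSize (s : Finset ℤ) : ℕ := (gapCells s).card

/-- Level `m` cheesy polyomino. -/
def IsCheesy (m : ℕ) (P : Finset Cell) : Prop :=
  IsPolyomino P ∧ RightwardSemiDirected P ∧
  ∀ x : ℤ, numComponents (columnYs P x) ≤ 2 ∧
    (numComponents (columnYs P x) = 2 → gapSize (columnYs P x) ≤ m)

/-- Height of a (nonempty) column: max − min + 1. -/
def heightN (s : Finset ℤ) : ℕ :=
  (WithBot.unbotD 0 s.max - WithTop.untopD 0 s.min + 1).toNat

/-- The maximal abscissa of a polyomino. -/
def maxX (P : Finset Cell) : ℤ := WithBot.unbotD 0 (P.image Prod.fst).max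

/-- The last column (ordinates of the column of maximal abscissa). -/
def lastCol (P : Finset Cell) : Finset ℤ := columnYs P (maxX P)

/-- Number of level one cheesy polyominoes with area `n` whose last column has
height `k`, counted up to translation. -/
def c1CountHt (n k : ℕ) : ℕ :=
  Nat.card {P : Finset Cell // IsCheesy 1 P ∧ Normalized P ∧
    P.card = n ∧ heightN (lastCol P) = k}

/-- The area and last column generating function `C ∈ (ℚ[t])⟦q⟧` of level one
cheesy polyominoes: the coefficient of `qⁿtᵏ` is `c1CountHt n k` (the height of
the last column never exceeds `n + 1`). -/
def Cser : PowerSeries (Polynomial ℚ) :=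
  PowerSeries.mk fun n =>
    ∑ k ∈ Finset.range (n + 2), Polynomial.C (c1CountHt n k : ℚ) * Polynomial.X ^ k

/-- `C₁ = C(q,1)`. -/
def C1 : PowerSeries ℚ :=
  PowerSeries.mk fun n => Polynomial.eval 1 (PowerSeries.coeff (R := Polynomial ℚ) n Cser)

/-- `D₁ = (∂C/∂t)(q,1)`. -/
def D1 : PowerSeries ℚ :=
  PowerSeries.mk fun n =>
    Polynomial.eval 1 (Polynomial.derivative (PowerSeries.coeff (R := Polynomial ℚ) n Cser))

/-- Embedding of `ℚ⟦q⟧` into `(ℚ[t])⟦q⟧`. -/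
def liftP : PowerSeries ℚ →+* PowerSeries (Polynomial ℚ) :=
  PowerSeries.map (Polynomial.C : ℚ →+* Polynomial ℚ)

/-- The variable `q` of `(ℚ[t])⟦q⟧`. -/
def qp : PowerSeries (Polynomial ℚ) := PowerSeries.X

/-- The variable `t` of `(ℚ[t])⟦q⟧`. -/
def tp : PowerSeries (Polynomial ℚ) := PowerSeries.C (R := Polynomial ℚ) Polynomial.X

open scoped Classical

/-! ### Part A: basic lemmas -/

lemma mem_columnYs {P : Finset Cell} {x y : ℤ} : y ∈ columnYs P x ↔ (x, y) ∈ P := by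
  simp only [columnYs, Finset.mem_image, Finset.mem_filter]
  constructor
  · rintro ⟨⟨a, b⟩, ⟨hmem, rfl⟩, rfl⟩; exact hmem
  · intro h; exact ⟨(x, y), ⟨h, rfl⟩, rfl⟩

lemma hexAdj_symm : Symmetric HexAdj := by
  intro a b h
  simp only [HexAdj, Set.mem_insert_iff, Set.mem_singleton_iff, Prod.mk.injEq] at h ⊢
  omega

lemma hexAdj_right {x c b : ℤ} : HexAdj (x, c) (x + 1, b) ↔ b = c ∨ b = c + 1 := by
  simp only [HexAdj, Set.mem_insert_iff, Set.mem_singleton_iff, Prod.mk.injEq]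
  omega

lemma hexAdj_up {x y : ℤ} : HexAdj (x, y) (x, y + 1) := by
  simp only [HexAdj, Set.mem_insert_iff, Set.mem_singleton_iff, Prod.mk.injEq]
  omega

lemma hexAdj_dx {a b : Cell} (h : HexAdj a b) : b.1 - a.1 ≤ 1 ∧ a.1 - b.1 ≤ 1 ∧ b.2 - a.2 ≤ 1 ∧ a.2 - b.2 ≤ 1 := by
  simp only [HexAdj, Set.mem_insert_iff, Set.mem_singleton_iff, Prod.mk.injEq] at h
  omega

/-! #### min/max helpers -/

lemma untop'_min {s : Finset ℤ} (hs : s.Nonempty) :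
    WithTop.untopD 0 s.min = s.min' hs := by
  rw [← Finset.coe_min' hs, WithTop.untopD_coe]

lemma unbot'_max {s : Finset ℤ} (hs : s.Nonempty) :
    WithBot.unbotD 0 s.max = s.max' hs := by
  rw [← Finset.coe_max' hs, WithBot.unbotD_coe]
/-! #### numComponents structure -/

lemma numComponents_empty : numComponents (∅ : Finset ℤ) = 0 := by
  simp [numComponents]

lemma numComponents_pos {s : Finset ℤ} (hs : s.Nonempty) : 1 ≤ numComponents s := by
  rw [Nat.one_le_iff_ne_zero, numComponents, Ne, Finset.card_eq_zero,
    ← Ne, ← Finset.nonempty_iff_ne_empty]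
  refine ⟨s.min' hs, Finset.mem_filter.2 ⟨s.min'_mem hs, fun h => ?_⟩⟩
  have := s.min'_le _ h; omega

lemma subset_Icc_min'_max' {s : Finset ℤ} (hs : s.Nonempty) :
    s ⊆ Finset.Icc (s.min' hs) (s.max' hs) := fun a ha =>
  Finset.mem_Icc.2 ⟨s.min'_le a ha, s.le_max' a ha⟩

lemma numComponents_Icc {a b : ℤ} (h : a ≤ b) :
    numComponents (Finset.Icc a b) = 1 := by
  rw [numComponents]
  have : (Finset.Icc a b).filter (fun x => x - 1 ∉ Finset.Icc a b) = {a} := by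
    ext x; simp only [Finset.mem_filter, Finset.mem_Icc, Finset.mem_singleton]; omega
  rw [this, Finset.card_singleton]

lemma numComponents_Icc_erase {a b g : ℤ} (h1 : a < g) (h2 : g < b) :
    numComponents (Finset.Icc a b \ {g}) = 2 := by
  have hmem : ∀ y : ℤ, y ∈ Finset.Icc a b \ {g} ↔ a ≤ y ∧ y ≤ b ∧ y ≠ g := by
    intro y
    simp only [Finset.mem_sdiff, Finset.mem_Icc, Finset.mem_singleton, and_assoc]
  rw [numComponents]
  have : (Finset.Icc a b \ {g}).filter (fun x => x - 1 ∉ Finset.Icc a b \ {g}) = {a, g+1} := by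
    ext x
    simp only [Finset.mem_filter, hmem, Finset.mem_insert, Finset.mem_singleton]
    constructor
    · rintro ⟨h, hl⟩; by_contra hc; push_neg at hc; exact hl ⟨by omega, by omega, by omega⟩
    · rintro (rfl | rfl)
      · exact ⟨⟨le_refl _, by omega, by omega⟩, fun h => by omega⟩
      · exact ⟨⟨by omega, by omega, by omega⟩, fun h => h.2.2 (by omega)⟩
  rw [this, Finset.card_insert_of_notMem (by simp; omega), Finset.card_singleton]

lemma Icc_min' {a b : ℤ} (h : a ≤ b) (hne : (Finset.Icc a b).Nonempty) :
    (Finset.Icc a b).min' hne = a :=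
  le_antisymm (Finset.min'_le _ _ (Finset.mem_Icc.2 ⟨le_refl _, h⟩))
    (Finset.le_min' _ _ _ (fun y hy => (Finset.mem_Icc.1 hy).1))

lemma Icc_max' {a b : ℤ} (h : a ≤ b) (hne : (Finset.Icc a b).Nonempty) :
    (Finset.Icc a b).max' hne = b :=
  le_antisymm (Finset.max'_le _ _ _ (fun y hy => (Finset.mem_Icc.1 hy).2))
    (Finset.le_max' _ _ (Finset.mem_Icc.2 ⟨h, le_refl _⟩))

lemma IccE_nonempty {a b g : ℤ} (h1 : a < g) (h2 : g < b) :
    (Finset.Icc a b \ {g}).Nonempty :=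
  ⟨a, by simp only [Finset.mem_sdiff, Finset.mem_Icc, Finset.mem_singleton]; omega⟩

lemma IccE_min' {a b g : ℤ} (h1 : a < g) (h2 : g < b) (hne : (Finset.Icc a b \ {g}).Nonempty) :
    (Finset.Icc a b \ {g}).min' hne = a := by
  refine le_antisymm (Finset.min'_le _ _ ?_) (Finset.le_min' _ _ _ (fun y hy => ?_))
  · simp only [Finset.mem_sdiff, Finset.mem_Icc, Finset.mem_singleton]; omega
  · simp only [Finset.mem_sdiff, Finset.mem_Icc, Finset.mem_singleton] at hy; omega

lemma IccE_max' {a b g : ℤ} (h1 : a < g) (h2 : g < b) (hne : (Finset.Icc a b \ {g}).Nonempty) :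
    (Finset.Icc a b \ {g}).max' hne = b := by
  refine le_antisymm (Finset.max'_le _ _ _ (fun y hy => ?_)) (Finset.le_max' _ _ ?_)
  · simp only [Finset.mem_sdiff, Finset.mem_Icc, Finset.mem_singleton] at hy; omega
  · simp only [Finset.mem_sdiff, Finset.mem_Icc, Finset.mem_singleton]; omega

/-- If some interior point is missing, there are at least two components. -/
lemma two_le_numComponents {s : Finset ℤ} (hs : s.Nonempty) {g : ℤ}
    (hg : g ∉ s) (h1 : s.min' hs ≤ g) (h2 : g ≤ s.max' hs) :
    2 ≤ numComponents s := by
  have hmax : s.max' hs ∈ s.filter (g < ·) := by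
    refine Finset.mem_filter.2 ⟨s.max'_mem hs, lt_of_le_of_ne h2 ?_⟩
    rintro rfl; exact hg (s.max'_mem hs)
  have hne : (s.filter (g < ·)).Nonempty := ⟨_, hmax⟩
  set a := (s.filter (g < ·)).min' hne with ha
  have haf : a ∈ s.filter (g < ·) := Finset.min'_mem _ hne
  have has : a ∈ s := (Finset.mem_filter.1 haf).1
  have hga : g < a := (Finset.mem_filter.1 haf).2
  have hal : a - 1 ∉ s := by
    intro hmem
    rcases eq_or_lt_of_le (by omega : g ≤ a - 1) with heq | hlt
    · exact hg (heq ▸ hmem)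
    · have : a - 1 ∈ s.filter (g < ·) := Finset.mem_filter.2 ⟨hmem, hlt⟩
      have := Finset.min'_le _ _ this
      omega
  have hm : s.min' hs ∈ s.filter (fun x => x - 1 ∉ s) := by
    refine Finset.mem_filter.2 ⟨s.min'_mem hs, fun h => ?_⟩
    have := s.min'_le _ h; omega
  have haf2 : a ∈ s.filter (fun x => x - 1 ∉ s) := Finset.mem_filter.2 ⟨has, hal⟩
  have hane : a ≠ s.min' hs := by
    intro h; rw [h] at hga; omega
  calc 2 = ({s.min' hs, a} : Finset ℤ).card := by
        rw [Finset.card_insert_of_notMem (by simpa using hane.symm), Finset.card_singleton]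
    _ ≤ _ := Finset.card_le_card (by
        intro x hx
        rcases Finset.mem_insert.1 hx with rfl | hx
        · exact hm
        · rwa [Finset.mem_singleton.1 hx])

lemma gapCells_eq {s : Finset ℤ} (hs : s.Nonempty) :
    gapCells s = Finset.Icc (s.min' hs) (s.max' hs) \ s := by
  rw [gapCells, untop'_min hs, unbot'_max hs]

/-- Structure of a nonempty level-1 cheesy column. -/
lemma column_structure {s : Finset ℤ} (hs : s.Nonempty)
    (h2 : numComponents s ≤ 2) (hgap : numComponents s = 2 → gapSize s ≤ 1) :
    s = Finset.Icc (s.min' hs) (s.max' hs) ∨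
    ∃ g, s.min' hs < g ∧ g < s.max' hs ∧ s = Finset.Icc (s.min' hs) (s.max' hs) \ {g} := by
  by_cases hg : gapCells s = ∅
  · left
    rw [gapCells_eq hs, Finset.sdiff_eq_empty_iff_subset] at hg
    exact (Finset.Subset.antisymm (subset_Icc_min'_max' hs) hg)
  · right
    rcases Finset.nonempty_iff_ne_empty.2 hg with ⟨g, hgmem⟩
    rw [gapCells_eq hs, Finset.mem_sdiff, Finset.mem_Icc] at hgmem
    obtain ⟨⟨hg1, hg2⟩, hg3⟩ := hgmem
    have hnc : numComponents s = 2 :=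
      le_antisymm h2 (two_le_numComponents hs hg3 hg1 hg2)
    have hsz := hgap hnc
    have hsingle : gapCells s = {g} := by
      have hgin : g ∈ gapCells s := by
        rw [gapCells_eq hs, Finset.mem_sdiff, Finset.mem_Icc]; exact ⟨⟨hg1, hg2⟩, hg3⟩
      have : (gapCells s).card = 1 := le_antisymm hsz (Finset.card_pos.2 ⟨g, hgin⟩)
      rcases Finset.card_eq_one.1 this with ⟨a, ha⟩
      rw [ha] at hgin ⊢
      rw [Finset.mem_singleton.1 hgin]
    have hmn : s.min' hs ≠ g := fun h => hg3 (h ▸ s.min'_mem hs)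
    have hmx : s.max' hs ≠ g := fun h => hg3 (h ▸ s.max'_mem hs)
    refine ⟨g, lt_of_le_of_ne hg1 hmn, lt_of_le_of_ne hg2 hmx.symm, ?_⟩
    rw [gapCells_eq hs] at hsingle
    ext x
    simp only [Finset.mem_sdiff, Finset.mem_singleton]
    constructor
    · intro hx
      have hxi := subset_Icc_min'_max' hs hx
      exact ⟨hxi, fun h => hg3 (h ▸ hx)⟩
    · rintro ⟨hxi, hxg⟩
      by_contra hxs
      have : x ∈ Finset.Icc (s.min' hs) (s.max' hs) \ s := Finset.mem_sdiff.2 ⟨hxi, hxs⟩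
      rw [hsingle, Finset.mem_singleton] at this
      exact hxg this

lemma heightN_eq {s : Finset ℤ} (hs : s.Nonempty) :
    heightN s = (s.max' hs - s.min' hs + 1).toNat := by
  rw [heightN, untop'_min hs, unbot'_max hs]

lemma gapSize_Icc {a b : ℤ} (h : a ≤ b) : gapSize (Finset.Icc a b) = 0 := by
  have hne : (Finset.Icc a b).Nonempty := ⟨a, Finset.mem_Icc.2 ⟨le_refl _, h⟩⟩
  rw [gapSize, gapCells_eq hne, Finset.card_eq_zero, Finset.sdiff_eq_empty_iff_subset,
    Icc_min' h hne, Icc_max' h hne]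

lemma gapSize_IccE {a b g : ℤ} (h1 : a < g) (h2 : g < b) :
    gapSize (Finset.Icc a b \ {g}) = 1 := by
  have hne := IccE_nonempty h1 h2
  rw [gapSize, gapCells_eq hne, IccE_min' h1 h2 hne, IccE_max' h1 h2 hne]
  have : Finset.Icc a b \ (Finset.Icc a b \ {g}) = {g} := by
    ext x
    simp only [Finset.mem_sdiff, Finset.mem_Icc, Finset.mem_singleton, not_and, not_not]
    constructor
    · rintro ⟨⟨hh1, hh2⟩, hh3⟩
      exact hh3 ⟨hh1, hh2⟩
    · rintro rfl; exact ⟨⟨by omega, by omega⟩, fun _ => rfl⟩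
  rw [this, Finset.card_singleton]

lemma card_Icc_int {a b : ℤ} : (Finset.Icc a b).card = (b + 1 - a).toNat := Int.card_Icc a b

lemma card_IccE {a b g : ℤ} (h1 : a < g) (h2 : g < b) :
    (Finset.Icc a b \ {g}).card = (b - a).toNat := by
  rw [Finset.card_sdiff_of_subset (by simp only [Finset.singleton_subset_iff, Finset.mem_Icc]; omega),
    card_Icc_int, Finset.card_singleton]
  omega

lemma heightN_Icc {a b : ℤ} (h : a ≤ b) : heightN (Finset.Icc a b) = (b - a + 1).toNat := by
  have hne : (Finset.Icc a b).Nonempty := ⟨a, Finset.mem_Icc.2 ⟨le_refl _, h⟩⟩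
  rw [heightN_eq hne, Icc_min' h hne, Icc_max' h hne]

lemma heightN_IccE {a b g : ℤ} (h1 : a < g) (h2 : g < b) :
    heightN (Finset.Icc a b \ {g}) = (b - a + 1).toNat := by
  have hne := IccE_nonempty h1 h2
  rw [heightN_eq hne, IccE_min' h1 h2 hne, IccE_max' h1 h2 hne]
/-! #### columnYs and maxX -/

lemma columnYs_nonempty_iff {P : Finset Cell} {x : ℤ} :
    (columnYs P x).Nonempty ↔ ∃ y, (x, y) ∈ P := by
  constructor
  · rintro ⟨y, hy⟩; exact ⟨y, mem_columnYs.1 hy⟩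
  · rintro ⟨y, hy⟩; exact ⟨y, mem_columnYs.2 hy⟩

lemma columnYs_union {P Q : Finset Cell} {x : ℤ} :
    columnYs (P ∪ Q) x = columnYs P x ∪ columnYs Q x := by
  ext y; simp only [mem_columnYs, Finset.mem_union]

lemma columnYs_eq_empty_iff {P : Finset Cell} {x : ℤ} :
    columnYs P x = ∅ ↔ ∀ y, (x, y) ∉ P := by
  rw [← Finset.not_nonempty_iff_eq_empty, columnYs_nonempty_iff]; push_neg; rfl

lemma mem_image_fst {P : Finset Cell} {x : ℤ} :
    x ∈ P.image Prod.fst ↔ (columnYs P x).Nonempty := by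
  rw [columnYs_nonempty_iff]
  simp only [Finset.mem_image, Prod.exists]
  constructor
  · rintro ⟨a, b, h, rfl⟩; exact ⟨b, h⟩
  · rintro ⟨y, h⟩; exact ⟨x, y, h, rfl⟩

lemma maxX_eq {P : Finset Cell} {X : ℤ} (h1 : (columnYs P X).Nonempty)
    (h2 : ∀ x, X < x → columnYs P x = ∅) : maxX P = X := by
  have hmax : (P.image Prod.fst).max = (X : WithBot ℤ) := by
    apply le_antisymm
    · apply Finset.max_le
      intro x hx
      rw [mem_image_fst] at hx
      by_contra hc
      push_neg at hc
      rw [WithBot.coe_lt_coe] at hc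
      rw [h2 x hc] at hx
      exact Finset.not_nonempty_empty hx
    · exact Finset.le_max (mem_image_fst.2 h1)
  rw [maxX, hmax, WithBot.unbotD_coe]

lemma col_maxX_nonempty {P : Finset Cell} (hP : P.Nonempty) :
    (columnYs P (maxX P)).Nonempty := by
  have hne : (P.image Prod.fst).Nonempty := hP.image _
  have h := Finset.max'_mem _ hne
  rw [mem_image_fst] at h
  have : maxX P = (P.image Prod.fst).max' hne := by
    rw [maxX, ← Finset.coe_max' hne, WithBot.unbotD_coe]
  rwa [this]

lemma col_empty_of_maxX_lt {P : Finset Cell} (hP : P.Nonempty) {x : ℤ} (hx : maxX P < x) :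
    columnYs P x = ∅ := by
  have hne : (P.image Prod.fst).Nonempty := hP.image _
  have hm : maxX P = (P.image Prod.fst).max' hne := by
    rw [maxX, ← Finset.coe_max' hne, WithBot.unbotD_coe]
  rw [columnYs_eq_empty_iff]
  intro y hy
  have : x ∈ P.image Prod.fst := Finset.mem_image.2 ⟨(x, y), hy, rfl⟩
  have := Finset.le_max' _ _ this
  omega

lemma le_maxX {P : Finset Cell} {x : ℤ} (h : (columnYs P x).Nonempty) : x ≤ maxX P := by
  by_contra hc
  push_neg at hc
  have hP : P.Nonempty := by
    rcases columnYs_nonempty_iff.1 h with ⟨y, hy⟩; exact ⟨_, hy⟩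
  rw [col_empty_of_maxX_lt hP hc] at h
  exact Finset.not_nonempty_empty h
/-! #### Translation -/

def shZ (d : ℤ) (s : Finset ℤ) : Finset ℤ := s.image (· + d)

lemma mem_shZ {d : ℤ} {s : Finset ℤ} {y : ℤ} : y ∈ shZ d s ↔ y - d ∈ s := by
  simp only [shZ, Finset.mem_image]
  constructor
  · rintro ⟨a, ha, rfl⟩; simpa using ha
  · intro h; exact ⟨y - d, h, by omega⟩

lemma mem_shZ' {d : ℤ} {s : Finset ℤ} {a : ℤ} (h : a ∈ s) : a + d ∈ shZ d s :=
  mem_shZ.2 (by rw [show a + d - d = a by omega]; exact h)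

lemma shZ_nonempty {d : ℤ} {s : Finset ℤ} : (shZ d s).Nonempty ↔ s.Nonempty := by
  constructor
  · rintro ⟨y, hy⟩; exact ⟨y - d, mem_shZ.1 hy⟩
  · rintro ⟨y, hy⟩; exact ⟨y + d, mem_shZ' hy⟩

lemma shZ_empty {d : ℤ} {s : Finset ℤ} (h : s = ∅) : shZ d s = ∅ := by
  rw [h]; rfl

lemma shZ_min' {d : ℤ} {s : Finset ℤ} (hs : s.Nonempty) :
    (shZ d s).min' (shZ_nonempty.2 hs) = s.min' hs + d := by
  apply le_antisymm
  · exact Finset.min'_le _ _ (mem_shZ' (s.min'_mem hs))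
  · apply Finset.le_min'
    intro y hy
    have := s.min'_le _ (mem_shZ.1 hy)
    omega

lemma shZ_max' {d : ℤ} {s : Finset ℤ} (hs : s.Nonempty) :
    (shZ d s).max' (shZ_nonempty.2 hs) = s.max' hs + d := by
  apply le_antisymm
  · apply Finset.max'_le
    intro y hy
    have := s.le_max' _ (mem_shZ.1 hy)
    omega
  · exact Finset.le_max' _ _ (mem_shZ' (s.max'_mem hs))

lemma shZ_card {d : ℤ} {s : Finset ℤ} : (shZ d s).card = s.card :=
  Finset.card_image_of_injective _ (fun a b h => by omega)

lemma shZ_numComponents {d : ℤ} {s : Finset ℤ} : numComponents (shZ d s) = numComponents s := by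
  rw [numComponents, numComponents]
  have : (shZ d s).filter (fun a => a - 1 ∉ shZ d s)
      = shZ d (s.filter (fun a => a - 1 ∉ s)) := by
    ext y
    simp only [Finset.mem_filter, mem_shZ]
    constructor
    · rintro ⟨h1, h2⟩; exact ⟨h1, by rw [show y - d - 1 = y - 1 - d by omega]; exact h2⟩
    · rintro ⟨h1, h2⟩; exact ⟨h1, by rw [show y - 1 - d = y - d - 1 by omega]; exact h2⟩
  rw [this, shZ_card]

lemma shZ_heightN {d : ℤ} {s : Finset ℤ} (hs : s.Nonempty) :
    heightN (shZ d s) = heightN s := by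
  rw [heightN_eq (shZ_nonempty.2 hs), heightN_eq hs, shZ_min' hs, shZ_max' hs]
  congr 1; omega

lemma shZ_gapSize {d : ℤ} {s : Finset ℤ} (hs : s.Nonempty) :
    gapSize (shZ d s) = gapSize s := by
  rw [gapSize, gapSize, gapCells_eq (shZ_nonempty.2 hs), gapCells_eq hs,
    shZ_min' hs, shZ_max' hs]
  have : Finset.Icc (s.min' hs + d) (s.max' hs + d) \ shZ d s
      = shZ d (Finset.Icc (s.min' hs) (s.max' hs) \ s) := by
    ext y
    simp only [Finset.mem_sdiff, Finset.mem_Icc, mem_shZ]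
    constructor <;> rintro ⟨⟨h1, h2⟩, h3⟩ <;> exact ⟨⟨by omega, by omega⟩, h3⟩
  rw [this, shZ_card]

def trP (d : ℤ) (P : Finset Cell) : Finset Cell := P.image (fun c => (c.1, c.2 + d))

lemma mem_trP {d : ℤ} {P : Finset Cell} {x y : ℤ} : (x, y) ∈ trP d P ↔ (x, y - d) ∈ P := by
  simp only [trP, Finset.mem_image]
  constructor
  · rintro ⟨⟨a, b⟩, h, heq⟩
    obtain ⟨rfl, rfl⟩ : a = x ∧ b + d = y := Prod.mk.injEq .. ▸ Prod.ext_iff.1 heq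
    simpa using h
  · intro h; exact ⟨(x, y - d), h, by simp⟩

lemma trP_trP {d e : ℤ} {P : Finset Cell} : trP d (trP e P) = trP (d + e) P := by
  ext ⟨x, y⟩
  rw [mem_trP, mem_trP, mem_trP]
  congr! 2
  omega

lemma trP_zero {P : Finset Cell} : trP 0 P = P := by
  ext ⟨x, y⟩; rw [mem_trP]; norm_num

lemma trP_card {d : ℤ} {P : Finset Cell} : (trP d P).card = P.card :=
  Finset.card_image_of_injective _ (fun a b h => by
    obtain ⟨h1, h2⟩ := Prod.ext_iff.1 h
    exact Prod.ext h1 (by omega))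

lemma trP_nonempty {d : ℤ} {P : Finset Cell} : (trP d P).Nonempty ↔ P.Nonempty := by
  constructor
  · rintro ⟨⟨x, y⟩, h⟩; exact ⟨_, mem_trP.1 h⟩
  · rintro ⟨⟨x, y⟩, h⟩; exact ⟨(x, y + d), mem_trP.2 (by simpa using h)⟩

lemma columnYs_trP {d : ℤ} {P : Finset Cell} {x : ℤ} :
    columnYs (trP d P) x = shZ d (columnYs P x) := by
  ext y; rw [mem_columnYs, mem_trP, mem_shZ, mem_columnYs]

lemma hexAdj_tr {d : ℤ} {a b : Cell} (h : HexAdj a b) :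
    HexAdj (a.1, a.2 + d) (b.1, b.2 + d) := by
  simpa [HexAdj, show b.2 + d - (a.2 + d) = b.2 - a.2 by omega] using h

lemma isPolyomino_trP {d : ℤ} {P : Finset Cell} (h : IsPolyomino P) : IsPolyomino (trP d P) := by
  obtain ⟨hne, hconn⟩ := h
  refine ⟨trP_nonempty.2 hne, ?_⟩
  rintro ⟨ax, ay⟩ ha ⟨bx, by'⟩ hb
  have := hconn (ax, ay - d) (mem_trP.1 ha) (bx, by' - d) (mem_trP.1 hb)
  have lift := Relation.ReflTransGen.lift (fun c : Cell => (c.1, c.2 + d))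
    (r := fun u v : Cell => u ∈ P ∧ v ∈ P ∧ HexAdj u v)
    (p := fun u v : Cell => u ∈ trP d P ∧ v ∈ trP d P ∧ HexAdj u v)
    (fun u v ⟨hu, hv, hadj⟩ => ⟨Finset.mem_image_of_mem _ hu,
      Finset.mem_image_of_mem _ hv, hexAdj_tr hadj⟩) _ _ this
  simpa [Function.onFun, show ay - d + d = ay by omega, show by' - d + d = by' by omega] using lift

lemma sameComp_shZ {d : ℤ} {s : Finset ℤ} {a b : ℤ} (h : SameComp s a b) :
    SameComp (shZ d s) (a + d) (b + d) := by
  obtain ⟨h1, h2, h3⟩ := h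
  refine ⟨mem_shZ' h1, mem_shZ' h2, fun c hc1 hc2 => ?_⟩
  rw [mem_shZ]
  apply h3 <;> omega

lemma rsd_trP {d : ℤ} {P : Finset Cell} (h : RightwardSemiDirected P) :
    RightwardSemiDirected (trP d P) := by
  obtain ⟨h1, h2⟩ := h
  constructor
  · intro x hx hall
    rw [columnYs_trP, shZ_numComponents]
    apply h1 x (by rw [columnYs_trP] at hx; exact shZ_nonempty.1 hx)
    intro x' hx'
    have h' := hall x' hx'
    rw [columnYs_trP] at h'
    rw [← Finset.not_nonempty_iff_eq_empty] at h' ⊢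
    exact fun hne => h' (shZ_nonempty.2 hne)
  · intro x hx hx1 b hb
    simp only [columnYs_trP] at hx hx1 hb ⊢
    obtain ⟨b', hb', hsc, c, hc, hadj⟩ :=
      h2 x (shZ_nonempty.1 hx) (shZ_nonempty.1 hx1) (b - d) (mem_shZ.1 hb)
    refine ⟨b' + d, mem_shZ' hb', ?_, c + d, mem_shZ' hc, ?_⟩
    · have := sameComp_shZ (d := d) hsc
      rwa [show b - d + d = b by omega] at this
    · have := hexAdj_tr (d := d) hadj
      simpa using this

lemma maxX_trP {d : ℤ} {P : Finset Cell} : maxX (trP d P) = maxX P := by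
  rw [maxX, maxX]
  congr 1
  congr 1
  ext x
  rw [mem_image_fst, mem_image_fst, columnYs_trP, shZ_nonempty]

lemma isCheesy_trP {d : ℤ} {P : Finset Cell} (h : IsCheesy 1 P) : IsCheesy 1 (trP d P) := by
  obtain ⟨hp, hr, hc⟩ := h
  refine ⟨isPolyomino_trP hp, rsd_trP hr, fun x => ?_⟩
  rw [columnYs_trP, shZ_numComponents]
  refine ⟨(hc x).1, fun h2 => ?_⟩
  rcases Finset.eq_empty_or_nonempty (columnYs P x) with he | hne
  · rw [he, numComponents_empty] at h2; omega
  · rw [shZ_gapSize hne]; exact (hc x).2 h2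

lemma isCheesy_trP_iff {d : ℤ} {P : Finset Cell} : IsCheesy 1 (trP d P) ↔ IsCheesy 1 P := by
  refine ⟨fun h => ?_, isCheesy_trP⟩
  have := isCheesy_trP (d := -d) h
  rwa [trP_trP, neg_add_cancel, trP_zero] at this

lemma lastCol_trP {d : ℤ} {P : Finset Cell} : lastCol (trP d P) = shZ d (lastCol P) := by
  rw [lastCol, lastCol, maxX_trP, columnYs_trP]

lemma heightN_lastCol_trP {d : ℤ} {P : Finset Cell} (hP : P.Nonempty) :
    heightN (lastCol (trP d P)) = heightN (lastCol P) := by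
  rw [lastCol_trP]
  exact shZ_heightN (col_maxX_nonempty hP)
/-! #### Connectivity -/

def pstep (P : Finset Cell) (u v : Cell) : Prop := u ∈ P ∧ v ∈ P ∧ HexAdj u v

lemma isPolyomino_iff {P : Finset Cell} :
    IsPolyomino P ↔ P.Nonempty ∧ ∀ a ∈ P, ∀ b ∈ P, Relation.ReflTransGen (pstep P) a b :=
  Iff.rfl

lemma pstep_symm {P : Finset Cell} : Symmetric (pstep P) :=
  fun _ _ ⟨hu, hv, h⟩ => ⟨hv, hu, hexAdj_symm h⟩

lemma rtg_symm {P : Finset Cell} {a b : Cell} (h : Relation.ReflTransGen (pstep P) a b) :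
    Relation.ReflTransGen (pstep P) b a :=
  haveI : Std.Symm (pstep P) := ⟨fun _ _ h => pstep_symm h⟩
  Std.Symm.symm _ _ h

lemma eq_Icc_of_numComponents_one {s : Finset ℤ} (hs : s.Nonempty)
    (h : numComponents s = 1) : s = Finset.Icc (s.min' hs) (s.max' hs) := by
  by_cases hg : gapCells s = ∅
  · rw [gapCells_eq hs, Finset.sdiff_eq_empty_iff_subset] at hg
    exact Finset.Subset.antisymm (subset_Icc_min'_max' hs) hg
  · exfalso
    rcases Finset.nonempty_iff_ne_empty.2 hg with ⟨g, hgmem⟩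
    rw [gapCells_eq hs, Finset.mem_sdiff, Finset.mem_Icc] at hgmem
    have := two_le_numComponents hs hgmem.2 hgmem.1.1 hgmem.1.2
    omega

/-- Vertical path upwards within a column. -/
lemma vert_path_up {P : Finset Cell} {x a b : ℤ} (hab : a ≤ b)
    (h : ∀ y, a ≤ y → y ≤ b → (x, y) ∈ P) :
    Relation.ReflTransGen (pstep P) (x, a) (x, b) := by
  have key : ∀ n : ℕ, ∀ b' : ℤ, a ≤ b' → b' - a = n → (∀ y, a ≤ y → y ≤ b' → (x, y) ∈ P) →
      Relation.ReflTransGen (pstep P) (x, a) (x, b') := by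
    intro n
    induction n with
    | zero => intro b' h1 h2 _; have : b' = a := by omega
              rw [this]
    | succ m ih =>
        intro b' h1 h2 hmem
        have hstep : Relation.ReflTransGen (pstep P) (x, a) (x, b' - 1) :=
          ih (b' - 1) (by omega) (by omega) (fun y hy1 hy2 => hmem y hy1 (by omega))
        refine hstep.tail ⟨hmem _ (by omega) (by omega), hmem _ h1 (le_refl _), ?_⟩
        have := hexAdj_up (x := x) (y := b' - 1)
        rwa [show b' - 1 + 1 = b' by omega] at this
  exact key (b - a).toNat b hab (by omega) h

/-- Vertical path between any two cells of one component of a column. -/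
lemma vert_path {P : Finset Cell} {x a b : ℤ}
    (h : ∀ y, min a b ≤ y → y ≤ max a b → (x, y) ∈ P) :
    Relation.ReflTransGen (pstep P) (x, a) (x, b) := by
  rcases le_total a b with hab | hab
  · exact vert_path_up hab (by intro y h1 h2; exact h y (by omega) (by omega))
  · exact rtg_symm (vert_path_up hab (by intro y h1 h2; exact h y (by omega) (by omega)))

/-- Intermediate value property for the first coordinate along paths. -/
lemma path_interm_fst {P : Finset Cell} {u v : Cell}
    (h : Relation.ReflTransGen (pstep P) u v) (hu : u ∈ P) :
    ∀ z, min u.1 v.1 ≤ z → z ≤ max u.1 v.1 → (columnYs P z).Nonempty := by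
  induction h with
  | refl =>
      intro z h1 h2
      have : z = u.1 := by omega
      subst this
      exact columnYs_nonempty_iff.2 ⟨u.2, by simpa using hu⟩
  | @tail b c hab hbc ih =>
      intro z h1 h2
      obtain ⟨hb, hc, hadj⟩ := hbc
      have hd := hexAdj_dx hadj
      by_cases hz : min u.1 b.1 ≤ z ∧ z ≤ max u.1 b.1
      · exact ih z hz.1 hz.2
      · have : z = c.1 := by omega
        subst this
        exact columnYs_nonempty_iff.2 ⟨c.2, by simpa using hc⟩

/-- Intermediate value property for the second coordinate along paths. -/
lemma path_interm_snd {P : Finset Cell} {u v : Cell}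
    (h : Relation.ReflTransGen (pstep P) u v) (hu : u ∈ P) :
    ∀ z, min u.2 v.2 ≤ z → z ≤ max u.2 v.2 → ∃ c ∈ P, c.2 = z := by
  induction h with
  | refl =>
      intro z h1 h2
      have : z = u.2 := by omega
      exact ⟨u, hu, this.symm⟩
  | @tail b c hab hbc ih =>
      intro z h1 h2
      obtain ⟨hb, hc, hadj⟩ := hbc
      have hd := hexAdj_dx hadj
      by_cases hz : min u.2 b.2 ≤ z ∧ z ≤ max u.2 b.2
      · exact ih z hz.1 hz.2
      · have : z = c.2 := by omega
        exact ⟨c, hc, this.symm⟩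

/-- In a polyomino, every abscissa between two occupied ones is occupied. -/
lemma col_nonempty_between {P : Finset Cell} (hP : IsPolyomino P) {a b : Cell}
    (ha : a ∈ P) (hb : b ∈ P) {z : ℤ} (h1 : min a.1 b.1 ≤ z) (h2 : z ≤ max a.1 b.1) :
    (columnYs P z).Nonempty :=
  path_interm_fst (hP.2 a ha b hb) ha z h1 h2

/-- Coordinate bounds within a polyomino. -/
lemma coord_bound {P : Finset Cell} (hP : IsPolyomino P) {a b : Cell}
    (ha : a ∈ P) (hb : b ∈ P) :
    b.1 - a.1 < P.card ∧ a.1 - b.1 < P.card ∧ b.2 - a.2 < P.card ∧ a.2 - b.2 < P.card := by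
  have h1 : Finset.Icc (min a.1 b.1) (max a.1 b.1) ⊆ P.image Prod.fst := by
    intro z hz
    rw [Finset.mem_Icc] at hz
    rw [mem_image_fst]
    exact path_interm_fst (hP.2 a ha b hb) ha z hz.1 hz.2
  have h2 : Finset.Icc (min a.2 b.2) (max a.2 b.2) ⊆ P.image Prod.snd := by
    intro z hz
    rw [Finset.mem_Icc] at hz
    rcases path_interm_snd (hP.2 a ha b hb) ha z hz.1 hz.2 with ⟨c, hc, rfl⟩
    exact Finset.mem_image_of_mem _ hc
  have c1 := Finset.card_le_card h1
  have c2 := Finset.card_le_card h2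
  have i1 := Finset.card_image_le (s := P) (f := Prod.fst)
  have i2 := Finset.card_image_le (s := P) (f := Prod.snd)
  rw [card_Icc_int] at c1 c2
  have hpos : 0 < P.card := Finset.card_pos.2 ⟨a, ha⟩
  omega

/-- Sufficient condition for connectivity, used for prefixes and extensions. -/
lemma isPolyomino_of_cols {P : Finset Cell} (hne : P.Nonempty)
    (hx0 : ∀ c ∈ P, 0 ≤ c.1)
    (hcols : ∀ c ∈ P, ∀ x, 0 ≤ x → x ≤ c.1 → (columnYs P x).Nonempty)
    (h0 : numComponents (columnYs P 0) = 1)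
    (hstep : ∀ x : ℤ, 0 ≤ x → (columnYs P (x+1)).Nonempty →
        ∀ b ∈ columnYs P (x+1), ∃ b' ∈ columnYs P (x+1),
        SameComp (columnYs P (x+1)) b b' ∧ ∃ c ∈ columnYs P x, HexAdj (x, c) (x+1, b')) :
    IsPolyomino P := by
  obtain ⟨c₀, hc₀⟩ := hne
  have hcol0 : (columnYs P 0).Nonempty := hcols c₀ hc₀ 0 (le_refl _) (hx0 c₀ hc₀)
  set y₀ := (columnYs P 0).min' hcol0 with hy₀
  have hanchor : (0, y₀) ∈ P := mem_columnYs.1 ((columnYs P 0).min'_mem hcol0)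
  have key : ∀ n : ℕ, ∀ a : Cell, a ∈ P → a.1 = n →
      Relation.ReflTransGen (pstep P) a (0, y₀) := by
    intro n
    induction n with
    | zero =>
        intro a ha hax
        have hax' : a.1 = 0 := by exact_mod_cast hax
        have ha0 : ((0 : ℤ), a.2) = a := by rw [Prod.ext_iff]; exact ⟨hax'.symm, rfl⟩
        have ha2 : a.2 ∈ columnYs P 0 := mem_columnYs.2 (ha0 ▸ ha)
        have hIcc := eq_Icc_of_numComponents_one hcol0 h0
        have hpath : Relation.ReflTransGen (pstep P) (0, a.2) (0, y₀) := by
          apply vert_path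
          intro y hy1 hy2
          apply mem_columnYs.1
          rw [hIcc]
          rw [Finset.mem_Icc]
          have hm1 := (columnYs P 0).min'_le _ ha2
          have hm2 := (columnYs P 0).le_max' _ ha2
          have hm3 := (columnYs P 0).le_max' _ ((columnYs P 0).min'_mem hcol0)
          constructor <;> omega
        rwa [ha0] at hpath
    | succ m ih =>
        intro a ha hax
        have hane : (columnYs P ((m : ℤ) + 1)).Nonempty :=
          columnYs_nonempty_iff.2 ⟨a.2, by rw [show ((m : ℤ) + 1) = a.1 by omega]; simpa using ha⟩
        have ha2 : a.2 ∈ columnYs P ((m : ℤ) + 1) :=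
          mem_columnYs.2 (by rw [show ((m : ℤ) + 1) = a.1 by omega]; simpa using ha)
        obtain ⟨b', hb', ⟨_, hb'mem, hsc⟩, c, hc, hadj⟩ :=
          hstep m (by positivity) hane a.2 ha2
        have hpath1 : Relation.ReflTransGen (pstep P) (((m : ℤ) + 1), a.2) (((m : ℤ) + 1), b') := by
          apply vert_path
          intro y hy1 hy2
          exact mem_columnYs.1 (hsc y hy1 hy2)
        have hedge : pstep P (((m : ℤ) + 1), b') ((m : ℤ), c) := by
          refine ⟨mem_columnYs.1 hb'mem, mem_columnYs.1 hc, hexAdj_symm hadj⟩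
        have hrest : Relation.ReflTransGen (pstep P) ((m : ℤ), c) (0, y₀) :=
          ih ((m : ℤ), c) (mem_columnYs.1 hc) rfl
        have : a = (((m : ℤ) + 1), a.2) := by
          rw [Prod.ext_iff]; exact ⟨by omega, rfl⟩
        rw [this]
        exact (hpath1.tail hedge).trans hrest
  refine ⟨⟨c₀, hc₀⟩, fun a ha b hb => ?_⟩
  have hka := key a.1.toNat a ha (by have := hx0 a ha; omega)
  have hkb := key b.1.toNat b hb (by have := hx0 b hb; omega)
  exact hka.trans (rtg_symm hkb)
/-! #### Anchored representatives and finiteness -/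

def AnchoredC (P : Finset Cell) : Prop :=
  (∀ c ∈ P, 0 ≤ c.1) ∧ (0 : ℤ) ∈ columnYs P 0 ∧ ∀ y ∈ columnYs P 0, 0 ≤ y

lemma anchored_origin {P : Finset Cell} (h : AnchoredC P) : ((0 : ℤ), (0 : ℤ)) ∈ P :=
  mem_columnYs.1 h.2.1

def boxC (n : ℕ) : Finset Cell := Finset.Icc ((0 : ℤ), -(n : ℤ)) ((n : ℤ), (n : ℤ))

lemma subset_boxC {P : Finset Cell} {n : ℕ} (hp : IsPolyomino P) (ha : AnchoredC P)
    (hc : P.card = n) : P ⊆ boxC n := by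
  intro c hcP
  have h0 : ((0 : ℤ), (0 : ℤ)) ∈ P := anchored_origin ha
  have hb := coord_bound hp h0 hcP
  have hx := ha.1 c hcP
  rw [boxC, Finset.mem_Icc]
  constructor <;> rw [Prod.le_def] <;> simp only [] <;> constructor <;> omega

noncomputable def aFin (n h : ℕ) : Finset (Finset Cell) :=
  ((boxC n).powerset).filter
    (fun P => IsCheesy 1 P ∧ AnchoredC P ∧ P.card = n ∧ heightN (lastCol P) = h)

lemma mem_aFin {n h : ℕ} {P : Finset Cell} :
    P ∈ aFin n h ↔ IsCheesy 1 P ∧ AnchoredC P ∧ P.card = n ∧ heightN (lastCol P) = h := by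
  rw [aFin, Finset.mem_filter, Finset.mem_powerset]
  constructor
  · rintro ⟨_, h⟩; exact h
  · rintro ⟨h1, h2, h3, h4⟩; exact ⟨subset_boxC h1.1 h2 h3, h1, h2, h3, h4⟩

/-- shift amounts -/
def dN (P : Finset Cell) : ℤ := -(WithTop.untopD 0 (columnYs P 0).min)
def dA (P : Finset Cell) : ℤ := -(WithTop.untopD 0 (P.image Prod.snd).min)

lemma image_snd_trP {d : ℤ} {P : Finset Cell} :
    (trP d P).image Prod.snd = shZ d (P.image Prod.snd) := by
  ext y
  simp only [Finset.mem_image, mem_shZ, Prod.exists]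
  constructor
  · rintro ⟨a, b, hmem, rfl⟩
    rcases mem_trP.1 hmem with h
    exact ⟨a, b - d, h, by omega⟩
  · rintro ⟨a, b, hmem, rfl⟩
    exact ⟨a, y, mem_trP.2 hmem, rfl⟩

lemma normalized_ymin {P : Finset Cell} (h : Normalized P) (hne : P.Nonempty) :
    WithTop.untopD 0 (P.image Prod.snd).min = 0 := by
  have hne' : (P.image Prod.snd).Nonempty := hne.image _
  rw [untop'_min hne']
  obtain ⟨c, hc, hc0⟩ := h.2.2
  apply le_antisymm
  · exact Finset.min'_le _ _ (Finset.mem_image.2 ⟨c, hc, hc0⟩)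
  · apply Finset.le_min'
    intro y hy
    rcases Finset.mem_image.1 hy with ⟨a, haP, rfl⟩
    exact (h.1 a haP).2

lemma anchored_col0min {P : Finset Cell} (h : AnchoredC P) :
    WithTop.untopD 0 (columnYs P 0).min = 0 := by
  have hne : (columnYs P 0).Nonempty := ⟨0, h.2.1⟩
  rw [untop'_min hne]
  exact le_antisymm (Finset.min'_le _ _ h.2.1) (Finset.le_min' _ _ _ h.2.2)

lemma untop'_min_shZ {d : ℤ} {s : Finset ℤ} (hs : s.Nonempty) :
    WithTop.untopD 0 (shZ d s).min = WithTop.untopD 0 s.min + d := by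
  rw [untop'_min hs, untop'_min (shZ_nonempty.2 hs)]
  exact shZ_min' hs

lemma col0_min_trP {d : ℤ} {P : Finset Cell} (hne : (columnYs P 0).Nonempty) :
    WithTop.untopD 0 (columnYs (trP d P) 0).min
      = WithTop.untopD 0 (columnYs P 0).min + d := by
  rw [columnYs_trP]
  exact untop'_min_shZ hne

lemma ymin_trP {d : ℤ} {P : Finset Cell} (hne : P.Nonempty) :
    WithTop.untopD 0 ((trP d P).image Prod.snd).min
      = WithTop.untopD 0 (P.image Prod.snd).min + d := by
  rw [image_snd_trP]
  exact untop'_min_shZ (hne.image _)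

/-- normalized → anchored shift -/
lemma anchored_of_normalized {P : Finset Cell} (hch : IsCheesy 1 P) (h : Normalized P) :
    AnchoredC (trP (dN P) P) := by
  obtain ⟨c0, hc0, hc0x⟩ := h.2.1
  have hcol0 : (columnYs P 0).Nonempty :=
    columnYs_nonempty_iff.2 ⟨c0.2, by rwa [show ((0:ℤ), c0.2) = c0 from Prod.ext hc0x.symm rfl]⟩
  refine ⟨?_, ?_, ?_⟩
  · rintro ⟨x, y⟩ hc
    exact (h.1 _ (mem_trP.1 hc)).1
  · rw [columnYs_trP, mem_shZ, dN, untop'_min hcol0]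
    simpa using (columnYs P 0).min'_mem hcol0
  · intro y hy
    rw [columnYs_trP, mem_shZ, dN, untop'_min hcol0] at hy
    have := (columnYs P 0).min'_le _ hy
    omega

/-- anchored → normalized shift -/
lemma normalized_of_anchored {P : Finset Cell} (hch : IsCheesy 1 P) (h : AnchoredC P) :
    Normalized (trP (dA P) P) := by
  have hne : P.Nonempty := ⟨_, anchored_origin h⟩
  have hne' : (P.image Prod.snd).Nonempty := hne.image _
  refine ⟨?_, ?_, ?_⟩
  · rintro ⟨x, y⟩ hc
    have hmem := mem_trP.1 hc
    refine ⟨h.1 (x, y - dA P) hmem, ?_⟩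
    simp only []
    rw [dA, untop'_min hne'] at *
    have := (P.image Prod.snd).min'_le (y - -(P.image Prod.snd).min' hne')
      (Finset.mem_image.2 ⟨_, hmem, rfl⟩)
    omega
  · exact ⟨((0 : ℤ), 0 + dA P), mem_trP.2 (by simpa using anchored_origin h), rfl⟩
  · have hmm := (P.image Prod.snd).min'_mem hne'
    rcases Finset.mem_image.1 hmm with ⟨a, haP, hay⟩
    refine ⟨(a.1, a.2 + dA P), ?_, ?_⟩
    · exact mem_trP.2 (by rw [show a.2 + dA P - dA P = a.2 by omega]; simpa using haP)
    · simp only []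
      rw [dA, untop'_min hne']
      omega
/-! #### Counting bridge -/

lemma c1CountHt_eq_aFin (n h : ℕ) : c1CountHt n h = (aFin n h).card := by
  rw [c1CountHt, ← Nat.card_eq_finsetCard (aFin n h)]
  apply Nat.card_congr
  refine Equiv.trans (Equiv.trans ?_
    (Equiv.subtypeEquivRight (q := fun P => P ∈ aFin n h) (fun P => mem_aFin.symm)))
    (Equiv.refl _)
  refine ⟨fun ⟨P, hP⟩ => ⟨trP (dN P) P, ?_⟩, fun ⟨Q, hQ⟩ => ⟨trP (dA Q) Q, ?_⟩, ?_, ?_⟩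
  · obtain ⟨h1, h2, h3, h4⟩ := hP
    have hne : P.Nonempty := h1.1.1
    exact ⟨isCheesy_trP h1, anchored_of_normalized h1 h2,
      by rw [trP_card]; exact h3, by rw [heightN_lastCol_trP hne]; exact h4⟩
  · obtain ⟨h1, h2, h3, h4⟩ := hQ
    have hne : Q.Nonempty := h1.1.1
    exact ⟨isCheesy_trP h1, normalized_of_anchored h1 h2,
      by rw [trP_card]; exact h3, by rw [heightN_lastCol_trP hne]; exact h4⟩
  · rintro ⟨P, h1, h2, h3, h4⟩
    apply Subtype.ext
    show trP (dA (trP (dN P) P)) (trP (dN P) P) = P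
    have hne : P.Nonempty := h1.1.1
    rw [trP_trP]
    have : dA (trP (dN P) P) = -(dN P) := by
      rw [dA, ymin_trP hne, normalized_ymin h2 hne]
      omega
    rw [this, neg_add_cancel, trP_zero]
  · rintro ⟨Q, h1, h2, h3, h4⟩
    apply Subtype.ext
    show trP (dN (trP (dA Q) Q)) (trP (dA Q) Q) = Q
    have hcol0 : (columnYs Q 0).Nonempty := ⟨0, h2.2.1⟩
    rw [trP_trP]
    have : dN (trP (dA Q) Q) = -(dA Q) := by
      rw [dN, col0_min_trP hcol0, anchored_col0min h2]
      omega
    rw [this, neg_add_cancel, trP_zero]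
/-! #### Vanishing lemmas -/

lemma columnYs_card_le {P : Finset Cell} {x : ℤ} : (columnYs P x).card ≤ P.card :=
  le_trans Finset.card_image_le (Finset.card_filter_le _ _)

lemma c1CountHt_area_zero (k : ℕ) : c1CountHt 0 k = 0 := by
  rw [c1CountHt_eq_aFin, Finset.card_eq_zero]
  rw [Finset.eq_empty_iff_forall_notMem]
  intro P hP
  rw [mem_aFin] at hP
  obtain ⟨h1, _, h3, _⟩ := hP
  exact Finset.card_ne_zero_of_mem (h1.1.1.choose_spec) h3

lemma heightN_pos {s : Finset ℤ} (hs : s.Nonempty) : 1 ≤ heightN s := by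
  rw [heightN_eq hs]
  have := Finset.min'_le _ _ (s.max'_mem hs)
  omega

lemma c1CountHt_ht_zero (n : ℕ) : c1CountHt n 0 = 0 := by
  rw [c1CountHt_eq_aFin, Finset.card_eq_zero, Finset.eq_empty_iff_forall_notMem]
  intro P hP
  rw [mem_aFin] at hP
  obtain ⟨h1, _, _, h4⟩ := hP
  have := heightN_pos (col_maxX_nonempty h1.1.1)
  rw [lastCol] at h4
  omega

/-- For a cheesy polyomino the height of the last column is at most the area. -/
lemma heightN_lastCol_le {P : Finset Cell} (h : IsCheesy 1 P) :
    heightN (lastCol P) ≤ P.card := by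
  obtain ⟨hpoly, hrsd, hcomp⟩ := h
  have hne : P.Nonempty := hpoly.1
  have hlne : (lastCol P).Nonempty := col_maxX_nonempty hne
  have hstruct := column_structure hlne (hcomp (maxX P)).1 (hcomp (maxX P)).2
  have hcardle : (lastCol P).card ≤ P.card := columnYs_card_le
  rcases hstruct with hIcc | ⟨g, hg1, hg2, hIccE⟩
  · rw [heightN_eq hlne]
    have : (lastCol P).card = ((lastCol P).max' hlne - (lastCol P).min' hlne + 1).toNat := by
      conv_lhs => rw [hIcc]
      rw [card_Icc_int]
      congr 1; omega
    omega
  · -- gapped last column: there must be another column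
    have hnc2 : numComponents (lastCol P) = 2 := by
      rw [hIccE]; exact numComponents_Icc_erase hg1 hg2
    have hextra : ∃ c ∈ P, c.1 ≠ maxX P := by
      by_contra hc
      push_neg at hc
      have hall : ∀ x' : ℤ, x' < maxX P → columnYs P x' = ∅ := by
        intro x' hx'
        rw [columnYs_eq_empty_iff]
        intro y hy
        exact absurd (hc _ hy) (by simp only []; omega)
      have := hrsd.1 (maxX P) hlne hall
      rw [lastCol] at hnc2
      omega
    obtain ⟨c, hcP, hcx⟩ := hextra
    have hsub : insert c ((lastCol P).image (fun y => (maxX P, y))) ⊆ P := by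
      intro d hd
      rcases Finset.mem_insert.1 hd with rfl | hd
      · exact hcP
      · rcases Finset.mem_image.1 hd with ⟨y, hy, rfl⟩
        exact mem_columnYs.1 hy
    have hcard : (insert c ((lastCol P).image (fun y => (maxX P, y)))).card
        = (lastCol P).card + 1 := by
      rw [Finset.card_insert_of_notMem, Finset.card_image_of_injective]
      · intro a b hab
        exact (Prod.ext_iff.1 hab).2
      · intro hmem
        rcases Finset.mem_image.1 hmem with ⟨y, _, heq⟩
        exact hcx ((Prod.ext_iff.1 heq).1.symm)
    have hle := Finset.card_le_card hsub
    rw [hcard] at hle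
    have hc2 : (lastCol P).card = ((lastCol P).max' hlne - (lastCol P).min' hlne).toNat := by
      conv_lhs => rw [hIccE]
      rw [card_IccE hg1 hg2]
    rw [heightN_eq hlne]
    omega

lemma c1CountHt_ht_gt (n k : ℕ) (h : n < k) : c1CountHt n k = 0 := by
  rw [c1CountHt_eq_aFin, Finset.card_eq_zero, Finset.eq_empty_iff_forall_notMem]
  intro P hP
  rw [mem_aFin] at hP
  obtain ⟨h1, _, h3, h4⟩ := hP
  have := heightN_lastCol_le h1
  omega
/-! #### Prefix decomposition -/

def prefixP (P : Finset Cell) : Finset Cell := P.filter (fun c => c.1 < maxX P)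

def colCell (X : ℤ) (s : Finset ℤ) : Finset Cell := s.image (fun y => (X, y))

lemma mem_colCell {X x y : ℤ} {s : Finset ℤ} : (x, y) ∈ colCell X s ↔ x = X ∧ y ∈ s := by
  simp only [colCell, Finset.mem_image]
  constructor
  · rintro ⟨a, ha, heq⟩
    rw [Prod.mk.injEq] at heq
    exact ⟨heq.1.symm, heq.2 ▸ ha⟩
  · rintro ⟨rfl, ha⟩
    exact ⟨y, ha, rfl⟩

lemma cell_le_maxX {P : Finset Cell} {c : Cell} (hc : c ∈ P) : c.1 ≤ maxX P :=
  le_maxX (columnYs_nonempty_iff.2 ⟨c.2, by rwa [show (c.1, c.2) = c from rfl]⟩)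

lemma anchored_col_neg {P : Finset Cell} (hA : AnchoredC P) {x : ℤ} (hx : x < 0) :
    columnYs P x = ∅ := by
  rw [columnYs_eq_empty_iff]
  intro y hy
  have := hA.1 _ hy
  simp only [] at this
  omega

lemma leftmost_zero {P : Finset Cell} (hA : AnchoredC P) {x : ℤ}
    (hx : (columnYs P x).Nonempty) (hall : ∀ x' : ℤ, x' < x → columnYs P x' = ∅) : x = 0 := by
  rcases lt_trichotomy x 0 with h | h | h
  · rw [anchored_col_neg hA h] at hx
    exact absurd hx Finset.not_nonempty_empty
  · exact h
  · exfalso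
    have h0 := hall 0 h
    have hm : (0:ℤ) ∈ columnYs P 0 := hA.2.1
    rw [h0] at hm
    exact absurd hm (Finset.notMem_empty _)

lemma anchored_maxX_nonneg {P : Finset Cell} (hA : AnchoredC P) : 0 ≤ maxX P :=
  le_maxX ⟨0, hA.2.1⟩

lemma columnYs_prefixP {P : Finset Cell} {x : ℤ} :
    columnYs (prefixP P) x = if x < maxX P then columnYs P x else ∅ := by
  split_ifs with hx
  · ext y
    rw [mem_columnYs, mem_columnYs, prefixP, Finset.mem_filter]
    exact ⟨fun h => h.1, fun h => ⟨h, hx⟩⟩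
  · rw [columnYs_eq_empty_iff]
    intro y hy
    rw [prefixP, Finset.mem_filter] at hy
    exact hx hy.2

lemma card_filter_col {P : Finset Cell} {x : ℤ} :
    (P.filter (fun c => c.1 = x)).card = (columnYs P x).card := by
  rw [columnYs]
  rw [Finset.card_image_of_injOn]
  intro a ha b hb hab
  rw [Finset.mem_coe, Finset.mem_filter] at ha hb
  exact Prod.ext (ha.2.trans hb.2.symm) hab

lemma card_prefix_split {P : Finset Cell} (hP : P.Nonempty) :
    P.card = (prefixP P).card + (lastCol P).card := by
  have h1 : P.filter (fun c => ¬ (c.1 < maxX P)) = P.filter (fun c => c.1 = maxX P) := by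
    apply Finset.filter_congr
    intro c hc
    have := cell_le_maxX hc
    constructor <;> intro h <;> simp at * <;> omega
  rw [← Finset.card_filter_add_card_filter_not (p := fun c : Cell => c.1 < maxX P), h1,
    card_filter_col]
  rfl

/-- The prefix of an anchored cheesy polyomino with at least two columns. -/
theorem deconstruct {P : Finset Cell} (hP : IsCheesy 1 P) (hA : AnchoredC P)
    (hX : 1 ≤ maxX P) :
    IsCheesy 1 (prefixP P) ∧ AnchoredC (prefixP P) ∧ maxX (prefixP P) = maxX P - 1 := by
  obtain ⟨hpoly, hrsd, hcomp⟩ := hP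
  have hne : P.Nonempty := hpoly.1
  have h00 : ((0:ℤ), (0:ℤ)) ∈ P := anchored_origin hA
  have hlast : (columnYs P (maxX P)).Nonempty := col_maxX_nonempty hne
  obtain ⟨ytop, hytop⟩ := hlast
  have htopP : (maxX P, ytop) ∈ P := mem_columnYs.1 hytop
  -- columns of P in [0, maxX] are nonempty
  have hcolsP : ∀ x : ℤ, 0 ≤ x → x ≤ maxX P → (columnYs P x).Nonempty := by
    intro x h1 h2
    exact col_nonempty_between hpoly h00 htopP (by simp only []; omega) (by simp only []; omega)
  have hpre_col : ∀ x : ℤ, x < maxX P → columnYs (prefixP P) x = columnYs P x := by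
    intro x hx
    rw [columnYs_prefixP, if_pos hx]
  have hpre_col' : ∀ x : ℤ, ¬ (x < maxX P) → columnYs (prefixP P) x = ∅ := by
    intro x hx
    rw [columnYs_prefixP, if_neg hx]
  have h00' : ((0:ℤ), (0:ℤ)) ∈ prefixP P := by
    rw [prefixP, Finset.mem_filter]
    exact ⟨h00, by simp only []; omega⟩
  have hApre : AnchoredC (prefixP P) := by
    refine ⟨?_, ?_, ?_⟩
    · intro c hc
      rw [prefixP, Finset.mem_filter] at hc
      exact hA.1 c hc.1
    · rw [hpre_col 0 (by omega)]
      exact hA.2.1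
    · intro y hy
      rw [hpre_col 0 (by omega)] at hy
      exact hA.2.2 y hy
  have hmaxpre : maxX (prefixP P) = maxX P - 1 := by
    apply maxX_eq
    · rw [hpre_col _ (by omega)]
      exact hcolsP _ (by omega) (by omega)
    · intro x hx
      by_cases hlt : x < maxX P
      · omega
      · exact hpre_col' x hlt
  have hcomp0 : numComponents (columnYs P 0) = 1 := by
    apply hrsd.1 0 (hcolsP 0 (le_refl _) (by omega))
    intro x' hx'
    exact anchored_col_neg hA hx'
  have hstep : ∀ x : ℤ, 0 ≤ x → (columnYs (prefixP P) (x+1)).Nonempty →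
      ∀ b ∈ columnYs (prefixP P) (x+1), ∃ b' ∈ columnYs (prefixP P) (x+1),
      SameComp (columnYs (prefixP P) (x+1)) b b' ∧
      ∃ c ∈ columnYs (prefixP P) x, HexAdj (x, c) (x+1, b') := by
    intro x hx0 hne1 b hb
    have hx1 : x + 1 < maxX P := by
      by_contra hc
      rw [hpre_col' _ hc] at hne1
      exact Finset.not_nonempty_empty hne1
    rw [hpre_col _ hx1] at hne1 hb
    rw [hpre_col _ hx1, hpre_col _ (by omega)]
    exact hrsd.2 x (hcolsP x hx0 (by omega)) hne1 b hb
  have hpoly_pre : IsPolyomino (prefixP P) := by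
    apply isPolyomino_of_cols ⟨_, h00'⟩ hApre.1 ?_ ?_ ?_
    · intro c hc x hx1 hx2
      rw [prefixP, Finset.mem_filter] at hc
      rw [hpre_col x (by omega)]
      exact hcolsP x hx1 (le_trans hx2 (by have := hc.2; omega))
    · rw [hpre_col 0 (by omega)]
      exact hcomp0
    · exact hstep
  refine ⟨⟨hpoly_pre, ⟨?_, ?_⟩, ?_⟩, hApre, hmaxpre⟩
  · intro x hx hall
    have hx0 : x = 0 := leftmost_zero hApre hx hall
    subst hx0
    rw [hpre_col 0 (by omega)]
    exact hcomp0
  · intro x hx hx1 b hb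
    have hx0 : 0 ≤ x := by
      by_contra hc
      push_neg at hc
      rw [columnYs_prefixP] at hx
      split_ifs at hx with h
      · rw [anchored_col_neg hA hc] at hx
        exact Finset.not_nonempty_empty hx
      · exact Finset.not_nonempty_empty hx
    exact hstep x hx0 hx1 b hb
  · intro x
    rw [columnYs_prefixP]
    split_ifs with h
    · exact hcomp x
    · rw [numComponents_empty]
      exact ⟨by omega, by omega⟩
/-! #### Reconstruction -/

theorem reconstruct {Q : Finset Cell} (hQ : IsCheesy 1 Q) (hA : AnchoredC Q)
    {s : Finset ℤ} (hs : s.Nonempty)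
    (hc1 : numComponents s ≤ 2) (hc2 : numComponents s = 2 → gapSize s ≤ 1)
    (hmeet : ∀ b ∈ s, ∃ b' ∈ s, SameComp s b b' ∧
      ∃ c ∈ columnYs Q (maxX Q), HexAdj (maxX Q, c) (maxX Q + 1, b')) :
    IsCheesy 1 (Q ∪ colCell (maxX Q + 1) s) ∧ AnchoredC (Q ∪ colCell (maxX Q + 1) s) ∧
      maxX (Q ∪ colCell (maxX Q + 1) s) = maxX Q + 1 ∧
      lastCol (Q ∪ colCell (maxX Q + 1) s) = s ∧
      prefixP (Q ∪ colCell (maxX Q + 1) s) = Q ∧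
      (Q ∪ colCell (maxX Q + 1) s).card = Q.card + s.card := by
  obtain ⟨hpoly, hrsd, hcomp⟩ := hQ
  have hne : Q.Nonempty := hpoly.1
  set X := maxX Q with hXdef
  set P := Q ∪ colCell (X + 1) s with hPdef
  have hX0 : 0 ≤ X := anchored_maxX_nonneg hA
  have h00 : ((0:ℤ), (0:ℤ)) ∈ Q := anchored_origin hA
  have hcol_hi : ∀ x : ℤ, X < x → columnYs Q x = ∅ := fun x hx => col_empty_of_maxX_lt hne hx
  have hcolP : ∀ x : ℤ, x ≠ X + 1 → columnYs P x = columnYs Q x := by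
    intro x hx
    ext y
    rw [mem_columnYs, hPdef, Finset.mem_union, mem_colCell, mem_columnYs]
    constructor
    · rintro (h | ⟨h1, h2⟩)
      · exact h
      · exact absurd h1 hx
    · intro h; exact Or.inl h
  have hcolP1 : columnYs P (X + 1) = s := by
    ext y
    rw [mem_columnYs, hPdef, Finset.mem_union, mem_colCell]
    constructor
    · rintro (h | ⟨_, h2⟩)
      · exfalso
        have : y ∈ columnYs Q (X+1) := mem_columnYs.2 h
        rw [hcol_hi (X+1) (by omega)] at this
        exact absurd this (Finset.notMem_empty _)
      · exact h2
    · intro h; exact Or.inr ⟨rfl, h⟩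
  have hmaxP : maxX P = X + 1 := by
    apply maxX_eq
    · rw [hcolP1]; exact hs
    · intro x hx
      rw [hcolP x (by omega)]
      exact hcol_hi x (by omega)
  have hcolsQ : ∀ x : ℤ, 0 ≤ x → x ≤ X → (columnYs Q x).Nonempty := by
    intro x h1 h2
    have := col_maxX_nonempty hne
    obtain ⟨ytop, hytop⟩ := this
    exact col_nonempty_between hpoly h00 (mem_columnYs.1 hytop) (by simp only []; omega)
      (by simp only []; omega)
  have hcolsP : ∀ x : ℤ, 0 ≤ x → x ≤ X + 1 → (columnYs P x).Nonempty := by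
    intro x h1 h2
    by_cases hx : x = X + 1
    · rw [hx, hcolP1]; exact hs
    · rw [hcolP x hx]; exact hcolsQ x h1 (by omega)
  have hAP : AnchoredC P := by
    refine ⟨?_, ?_, ?_⟩
    · rintro ⟨x, y⟩ hc
      rw [hPdef, Finset.mem_union, mem_colCell] at hc
      rcases hc with h | ⟨rfl, _⟩
      · exact hA.1 _ h
      · simp only []; omega
    · rw [hcolP 0 (by omega)]; exact hA.2.1
    · intro y hy
      rw [hcolP 0 (by omega)] at hy
      exact hA.2.2 y hy
  have hrsd2P : ∀ x : ℤ, (columnYs P x).Nonempty → (columnYs P (x+1)).Nonempty →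
      ∀ b ∈ columnYs P (x+1), ∃ b' ∈ columnYs P (x+1),
        SameComp (columnYs P (x+1)) b b' ∧ ∃ c ∈ columnYs P x, HexAdj (x, c) (x+1, b') := by
    intro x hx hx1 b hb
    by_cases hxx : x + 1 = X + 1
    · rw [show x = X by omega] at hx hb hx1 ⊢
      rw [hcolP1] at hx1 hb ⊢
      rw [hcolP X (by omega)]
      exact hmeet b hb
    · by_cases hxx2 : x + 1 < X + 1
      · rw [hcolP (x+1) (by omega)] at hx1 hb ⊢
        rw [hcolP x (by omega)] at hx ⊢
        exact hrsd.2 x hx hx1 b hb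
      · exfalso
        rw [hcolP (x+1) (by omega), hcol_hi (x+1) (by omega)] at hx1
        exact Finset.not_nonempty_empty hx1
  have hpolyP : IsPolyomino P := by
    apply isPolyomino_of_cols ⟨_, Finset.mem_union_left _ h00⟩ hAP.1 ?_ ?_ ?_
    · rintro ⟨cx, cy⟩ hc x hx1 hx2
      refine hcolsP x hx1 ?_
      rw [Finset.mem_union, mem_colCell] at hc
      rcases hc with h | ⟨rfl, _⟩
      · have := cell_le_maxX h
        simp only [] at this hx2 ⊢
        omega
      · simp only [] at hx2 ⊢
        omega
    · rw [hcolP 0 (by omega)]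
      apply hrsd.1 0 (hcolsQ 0 (le_refl _) hX0)
      intro x' hx'
      exact anchored_col_neg hA hx'
    · intro x hx0 hne1 b hb
      have hcx : (columnYs P x).Nonempty := by
        apply hcolsP x hx0
        by_contra hc
        push_neg at hc
        rw [hcolP (x+1) (by omega), hcol_hi (x+1) (by omega)] at hne1
        exact Finset.not_nonempty_empty hne1
      exact hrsd2P x hcx hne1 b hb
  refine ⟨⟨hpolyP, ⟨?_, hrsd2P⟩, ?_⟩, hAP, hmaxP, by rw [lastCol, hmaxP, hcolP1], ?_, ?_⟩
  · intro x hx hall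
    have hx0 : x = 0 := leftmost_zero hAP hx hall
    subst hx0
    rw [hcolP 0 (by omega)]
    apply hrsd.1 0 (hcolsQ 0 (le_refl _) hX0)
    intro x' hx'
    exact anchored_col_neg hA hx'
  · intro x
    by_cases hx : x = X + 1
    · rw [hx, hcolP1]
      exact ⟨hc1, hc2⟩
    · rw [hcolP x hx]
      exact hcomp x
  · rw [prefixP, hmaxP]
    ext ⟨x, y⟩
    rw [Finset.mem_filter, hPdef, Finset.mem_union, mem_colCell]
    constructor
    · rintro ⟨h | ⟨rfl, _⟩, hlt⟩
      · exact h
      · simp only [] at hlt; omega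
    · intro h
      refine ⟨Or.inl h, ?_⟩
      have := cell_le_maxX h
      simp only [] at this ⊢
      omega
  · rw [hPdef, Finset.card_union_of_disjoint, colCell,
      Finset.card_image_of_injective _ (fun a b hab => (Prod.ext_iff.1 hab).2)]
    rw [Finset.disjoint_right]
    rintro ⟨x, y⟩ hc hcQ
    rw [mem_colCell] at hc
    have := cell_le_maxX hcQ
    simp only [] at this
    omega
/-! #### mnZ/mxZ and structure helpers -/

def mnZ (s : Finset ℤ) : ℤ := WithTop.untopD 0 s.min
def mxZ (s : Finset ℤ) : ℤ := WithBot.unbotD 0 s.max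

lemma mnZ_eq {s : Finset ℤ} (hs : s.Nonempty) : mnZ s = s.min' hs := untop'_min hs
lemma mxZ_eq {s : Finset ℤ} (hs : s.Nonempty) : mxZ s = s.max' hs := unbot'_max hs

lemma mnZ_Icc {a b : ℤ} (h : a ≤ b) : mnZ (Finset.Icc a b) = a := by
  rw [mnZ_eq (Finset.nonempty_Icc.2 h), Icc_min' h]

lemma mxZ_Icc {a b : ℤ} (h : a ≤ b) : mxZ (Finset.Icc a b) = b := by
  rw [mxZ_eq (Finset.nonempty_Icc.2 h), Icc_max' h]

lemma mnZ_IccE {a b g : ℤ} (h1 : a < g) (h2 : g < b) : mnZ (Finset.Icc a b \ {g}) = a := by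
  rw [mnZ_eq (IccE_nonempty h1 h2), IccE_min' h1 h2]

lemma mxZ_IccE {a b g : ℤ} (h1 : a < g) (h2 : g < b) : mxZ (Finset.Icc a b \ {g}) = b := by
  rw [mxZ_eq (IccE_nonempty h1 h2), IccE_max' h1 h2]

lemma mnZ_singleton {g : ℤ} : mnZ ({g} : Finset ℤ) = g := by
  rw [mnZ_eq ⟨g, Finset.mem_singleton_self g⟩]
  exact le_antisymm (Finset.min'_le _ _ (Finset.mem_singleton_self g))
    (Finset.le_min' _ _ _ (fun y hy => (Finset.mem_singleton.1 hy).ge))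

lemma heightN_cast {s : Finset ℤ} (hs : s.Nonempty) :
    (heightN s : ℤ) = mxZ s - mnZ s + 1 := by
  rw [heightN, mnZ, mxZ]
  have h1 : WithTop.untopD 0 s.min = s.min' hs := untop'_min hs
  have h2 : WithBot.unbotD 0 s.max = s.max' hs := unbot'_max hs
  rw [h1, h2]
  have := Finset.min'_le _ _ (s.max'_mem hs)
  omega

lemma mnZ_mem {s : Finset ℤ} (hs : s.Nonempty) : mnZ s ∈ s := by
  rw [mnZ_eq hs]; exact s.min'_mem hs

lemma mxZ_mem {s : Finset ℤ} (hs : s.Nonempty) : mxZ s ∈ s := by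
  rw [mxZ_eq hs]; exact s.max'_mem hs

lemma mnZ_le {s : Finset ℤ} (hs : s.Nonempty) {y : ℤ} (hy : y ∈ s) : mnZ s ≤ y := by
  rw [mnZ_eq hs]; exact s.min'_le _ hy

lemma le_mxZ {s : Finset ℤ} (hs : s.Nonempty) {y : ℤ} (hy : y ∈ s) : y ≤ mxZ s := by
  rw [mxZ_eq hs]; exact s.le_max' _ hy

lemma full_col_eq_Icc {s : Finset ℤ} (hs : s.Nonempty) (hg : gapCells s = ∅) :
    s = Finset.Icc (mnZ s) (mxZ s) := by
  rw [gapCells_eq hs, Finset.sdiff_eq_empty_iff_subset] at hg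
  rw [mnZ_eq hs, mxZ_eq hs]
  exact Finset.Subset.antisymm (subset_Icc_min'_max' hs) hg

lemma gapCells_Icc {a b : ℤ} (h : a ≤ b) : gapCells (Finset.Icc a b) = ∅ := by
  have := gapSize_Icc h
  rw [gapSize, Finset.card_eq_zero] at this
  exact this

lemma gapCells_IccE {a b g : ℤ} (h1 : a < g) (h2 : g < b) :
    gapCells (Finset.Icc a b \ {g}) = {g} := by
  have hne := IccE_nonempty h1 h2
  rw [gapCells_eq hne, IccE_min' h1 h2 hne, IccE_max' h1 h2 hne]
  ext x
  simp only [Finset.mem_sdiff, Finset.mem_Icc, Finset.mem_singleton, not_and, not_not]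
  constructor
  · rintro ⟨⟨hh1, hh2⟩, hh3⟩
    exact hh3 ⟨hh1, hh2⟩
  · rintro rfl; exact ⟨⟨by omega, by omega⟩, fun _ => rfl⟩

/-- Structure of the last column of a level-1 cheesy polyomino. -/
lemma lastCol_structure {P : Finset Cell} (h : IsCheesy 1 P) :
    lastCol P = Finset.Icc (mnZ (lastCol P)) (mxZ (lastCol P)) ∨
    ∃ g, mnZ (lastCol P) < g ∧ g < mxZ (lastCol P) ∧
      lastCol P = Finset.Icc (mnZ (lastCol P)) (mxZ (lastCol P)) \ {g} := by
  have hne : (lastCol P).Nonempty := col_maxX_nonempty h.1.1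
  have := column_structure hne (h.2.2 (maxX P)).1 (h.2.2 (maxX P)).2
  rw [← mnZ_eq hne, ← mxZ_eq hne] at this
  exact this

/-- Decomposition of a polyomino into prefix and last column. -/
lemma eq_prefix_union_lastCol {P : Finset Cell} : P = prefixP P ∪ colCell (maxX P) (lastCol P) := by
  ext ⟨x, y⟩
  rw [Finset.mem_union, mem_colCell, prefixP, Finset.mem_filter]
  constructor
  · intro h
    have hle := cell_le_maxX h
    simp only [] at hle
    rcases eq_or_lt_of_le hle with heq | hlt
    · exact Or.inr ⟨heq, mem_columnYs.2 (heq ▸ h)⟩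
    · exact Or.inl ⟨h, hlt⟩
  · rintro (⟨h, _⟩ | ⟨rfl, h⟩)
    · exact h
    · exact mem_columnYs.1 h

/-- Shadow lemma: every ordinate in `[m', M'+1]` is adjacent to the last column. -/
lemma shadow {Q : Finset Cell} (hQ : IsCheesy 1 Q) {y : ℤ}
    (h1 : mnZ (lastCol Q) ≤ y) (h2 : y ≤ mxZ (lastCol Q) + 1) :
    ∃ c ∈ columnYs Q (maxX Q), HexAdj (maxX Q, c) (maxX Q + 1, y) := by
  have hne : (lastCol Q).Nonempty := col_maxX_nonempty hQ.1.1
  have hminmax : mnZ (lastCol Q) ≤ mxZ (lastCol Q) := by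
    have := heightN_cast hne
    have := heightN_pos hne
    omega
  rcases lastCol_structure hQ with hIcc | ⟨g, hg1, hg2, hIccE⟩
  · have hmem : ∀ z, mnZ (lastCol Q) ≤ z → z ≤ mxZ (lastCol Q) → z ∈ columnYs Q (maxX Q) := by
      intro z hz1 hz2
      have hz : z ∈ Finset.Icc (mnZ (lastCol Q)) (mxZ (lastCol Q)) := Finset.mem_Icc.2 ⟨hz1, hz2⟩
      rw [← hIcc] at hz
      exact hz
    by_cases hy : y ≤ mxZ (lastCol Q)
    · exact ⟨y, hmem y h1 hy, hexAdj_right.2 (Or.inl rfl)⟩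
    · exact ⟨mxZ (lastCol Q), hmem _ hminmax (le_refl _), hexAdj_right.2 (Or.inr (by omega))⟩
  · have hmem : ∀ z, mnZ (lastCol Q) ≤ z → z ≤ mxZ (lastCol Q) → z ≠ g →
        z ∈ columnYs Q (maxX Q) := by
      intro z hz1 hz2 hz3
      have hz : z ∈ Finset.Icc (mnZ (lastCol Q)) (mxZ (lastCol Q)) \ {g} := by
        simp only [Finset.mem_sdiff, Finset.mem_Icc, Finset.mem_singleton]
        exact ⟨⟨hz1, hz2⟩, hz3⟩
      rw [← hIccE] at hz
      exact hz
    by_cases hy : y = g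
    · exact ⟨g - 1, hmem _ (by omega) (by omega) (by omega),
        hexAdj_right.2 (Or.inr (by omega))⟩
    · by_cases hy2 : y ≤ mxZ (lastCol Q)
      · exact ⟨y, hmem y h1 hy2 hy, hexAdj_right.2 (Or.inl rfl)⟩
      · exact ⟨mxZ (lastCol Q), hmem _ hminmax (le_refl _) (by omega),
          hexAdj_right.2 (Or.inr (by omega))⟩
/-! #### Fibers: the full-column case -/

lemma hexAdj_snd_of_dx1 {a b : Cell} (h : HexAdj a b) (hx : b.1 - a.1 = 1) :
    b.2 = a.2 ∨ b.2 = a.2 + 1 := by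
  simp only [HexAdj, Set.mem_insert_iff, Set.mem_singleton_iff, Prod.mk.injEq] at h
  omega

noncomputable def aFinAll (m : ℕ) : Finset (Finset Cell) :=
  ((boxC m).powerset).filter (fun P => IsCheesy 1 P ∧ AnchoredC P ∧ P.card = m)

lemma mem_aFinAll {m : ℕ} {P : Finset Cell} :
    P ∈ aFinAll m ↔ IsCheesy 1 P ∧ AnchoredC P ∧ P.card = m := by
  rw [aFinAll, Finset.mem_filter, Finset.mem_powerset]
  exact ⟨fun h => h.2, fun h => ⟨subset_boxC h.1.1 h.2.1 h.2.2, h⟩⟩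

lemma aFinAll_filter_height (m k : ℕ) :
    (aFinAll m).filter (fun P => heightN (lastCol P) = k) = aFin m k := by
  ext P
  rw [Finset.mem_filter, mem_aFinAll, mem_aFin]
  tauto

noncomputable def Tf (n h : ℕ) : Finset (Finset Cell) :=
  (aFin n h).filter (fun P => 1 ≤ maxX P ∧ gapCells (lastCol P) = ∅)

noncomputable def Tg (n h : ℕ) : Finset (Finset Cell) :=
  (aFin n h).filter (fun P => 1 ≤ maxX P ∧ gapCells (lastCol P) ≠ ∅)

/-- Facts about a member of the fiber over `Q`. -/
lemma prefix_facts {P : Finset Cell} (hch : IsCheesy 1 P) (hA : AnchoredC P)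
    (hmx : 1 ≤ maxX P) :
    IsCheesy 1 (prefixP P) ∧ AnchoredC (prefixP P) ∧ maxX (prefixP P) = maxX P - 1 ∧
      lastCol (prefixP P) = columnYs P (maxX P - 1) ∧
      P.card = (prefixP P).card + (lastCol P).card := by
  obtain ⟨h1, h2, h3⟩ := deconstruct hch hA hmx
  refine ⟨h1, h2, h3, ?_, card_prefix_split hch.1.1⟩
  rw [lastCol, h3, columnYs_prefixP, if_pos (by omega)]

lemma Tf_mapsTo {n h : ℕ} : ∀ P ∈ Tf n h, prefixP P ∈ aFinAll (n - h) := by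
  intro P hP
  rw [Tf, Finset.mem_filter, mem_aFin] at hP
  obtain ⟨⟨hch, hA, hcard, hht⟩, hmx, hfull⟩ := hP
  obtain ⟨h1, h2, _, _, h5⟩ := prefix_facts hch hA hmx
  rw [mem_aFinAll]
  refine ⟨h1, h2, ?_⟩
  have hlne : (lastCol P).Nonempty := col_maxX_nonempty hch.1.1
  have hlcard : (lastCol P).card = h := by
    have hIcc := full_col_eq_Icc hlne hfull
    have hcast := heightN_cast hlne
    rw [hht] at hcast
    conv_lhs => rw [hIcc]
    rw [card_Icc_int]
    omega
  omega

lemma fiber_full {n h : ℕ} (hh : 1 ≤ h) {Q : Finset Cell} (hQ : Q ∈ aFinAll (n - h)) :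
    ((Tf n h).filter (fun P => prefixP P = Q)).card = h + heightN (lastCol Q) := by
  rw [mem_aFinAll] at hQ
  obtain ⟨hQch, hQA, hQcard⟩ := hQ
  have hQne : Q.Nonempty := hQch.1.1
  have hQpos : 1 ≤ n - h := hQcard ▸ Finset.card_pos.2 hQne
  have hQlne : (lastCol Q).Nonempty := col_maxX_nonempty hQne
  set m' := mnZ (lastCol Q) with hm'
  set M' := mxZ (lastCol Q) with hM'
  have hk' : (heightN (lastCol Q) : ℤ) = M' - m' + 1 := heightN_cast hQlne
  have hmm : m' ≤ M' := by
    have := heightN_pos hQlne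
    omega
  have hXQ : 0 ≤ maxX Q := anchored_maxX_nonneg hQA
  rw [Finset.card_bij' (i := fun P _ => mnZ (lastCol P))
    (j := fun b _ => Q ∪ colCell (maxX Q + 1) (Finset.Icc b (b + (h : ℤ) - 1)))
    (t := Finset.Icc (m' - (h : ℤ) + 1) (M' + 1)) ?_ ?_ ?_ ?_, card_Icc_int]
  · omega
  · -- i maps into the interval
    intro P hP
    rw [Finset.mem_filter, Tf, Finset.mem_filter, mem_aFin] at hP
    obtain ⟨⟨⟨hch, hA, hcard, hht⟩, hmx, hfull⟩, hpre⟩ := hP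
    have hlne : (lastCol P).Nonempty := col_maxX_nonempty hch.1.1
    have hIcc := full_col_eq_Icc hlne hfull
    have hcast := heightN_cast hlne
    rw [hht] at hcast
    obtain ⟨_, _, hmaxQ, hlastQ, _⟩ := prefix_facts hch hA hmx
    rw [hpre] at hmaxQ hlastQ
    -- the last column of P meets the shadow of the one of Q
    have hcolne : (columnYs P (maxX P - 1)).Nonempty := by
      rw [← hlastQ]; exact hQlne
    have hstep := hch.2.1.2 (maxX P - 1) hcolne
      (by rw [show maxX P - 1 + 1 = maxX P by omega]; exact hlne)
    rw [show maxX P - 1 + 1 = maxX P by omega] at hstep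
    obtain ⟨b', hb', _, c, hc, hadj⟩ := hstep (mnZ (lastCol P)) (mnZ_mem hlne)
    rw [← lastCol] at hb'
    rw [← hlastQ] at hc
    have hcb : m' ≤ c ∧ c ≤ M' := ⟨mnZ_le hQlne hc, le_mxZ hQlne hc⟩
    have hadj' : b' = c ∨ b' = c + 1 := by
      have hd := hexAdj_snd_of_dx1 hadj (by simp only []; omega)
      simpa using hd
    have hb'range : mnZ (lastCol P) ≤ b' ∧ b' ≤ mnZ (lastCol P) + h - 1 := by
      constructor
      · exact mnZ_le hlne hb'
      · have := le_mxZ hlne hb'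
        omega
    show mnZ (lastCol P) ∈ Finset.Icc (m' - (h : ℤ) + 1) (M' + 1)
    rw [Finset.mem_Icc]
    omega
  · -- j maps into the fiber
    intro b hb
    rw [Finset.mem_Icc] at hb
    have hbs : b ≤ b + (h : ℤ) - 1 := by omega
    have hsne : (Finset.Icc b (b + (h : ℤ) - 1)).Nonempty := ⟨b, Finset.mem_Icc.2 ⟨le_refl _, hbs⟩⟩
    have hrec := reconstruct hQch hQA hsne
      (by rw [numComponents_Icc hbs]; omega) (by rw [numComponents_Icc hbs]; omega) ?_
    · obtain ⟨h1, h2, h3, h4, h5, h6⟩ := hrec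
      rw [Finset.mem_filter, Tf, Finset.mem_filter, mem_aFin]
      refine ⟨⟨⟨h1, h2, ?_, ?_⟩, by rw [h3]; omega, ?_⟩, h5⟩
      · rw [h6, card_Icc_int, hQcard]
        have : ((b + (h:ℤ) - 1) + 1 - b).toNat = h := by omega
        omega
      · rw [h4, heightN_Icc hbs]
        omega
      · rw [h4]
        exact gapCells_Icc hbs
    · -- the meeting condition
      intro y hy
      rw [Finset.mem_Icc] at hy
      refine ⟨max b m', Finset.mem_Icc.2 ⟨by omega, by omega⟩, ?_, ?_⟩
      · refine ⟨Finset.mem_Icc.2 ⟨hy.1, hy.2⟩, Finset.mem_Icc.2 ⟨by omega, by omega⟩, ?_⟩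
        intro c hc1 hc2
        rw [Finset.mem_Icc]
        omega
      · exact shadow hQch (by omega) (by omega)
  · -- left inverse
    intro P hP
    show Q ∪ colCell (maxX Q + 1)
      (Finset.Icc (mnZ (lastCol P)) (mnZ (lastCol P) + (h : ℤ) - 1)) = P
    rw [Finset.mem_filter, Tf, Finset.mem_filter, mem_aFin] at hP
    obtain ⟨⟨⟨hch, hA, hcard, hht⟩, hmx, hfull⟩, hpre⟩ := hP
    have hlne : (lastCol P).Nonempty := col_maxX_nonempty hch.1.1
    have hIcc := full_col_eq_Icc hlne hfull
    have hcast := heightN_cast hlne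
    rw [hht] at hcast
    obtain ⟨_, _, hmaxQ, _, _⟩ := prefix_facts hch hA hmx
    rw [hpre] at hmaxQ
    have hxx : maxX Q + 1 = maxX P := by omega
    have hIcc2 : Finset.Icc (mnZ (lastCol P)) (mnZ (lastCol P) + (h : ℤ) - 1) = lastCol P := by
      conv_rhs => rw [hIcc]
      congr 1
      omega
    rw [hxx, hIcc2, ← hpre]
    exact (eq_prefix_union_lastCol).symm
  · -- right inverse
    intro b hb
    rw [Finset.mem_Icc] at hb
    have hbs : b ≤ b + (h : ℤ) - 1 := by omega
    have hsne : (Finset.Icc b (b + (h : ℤ) - 1)).Nonempty := ⟨b, Finset.mem_Icc.2 ⟨le_refl _, hbs⟩⟩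
    have hrec := reconstruct hQch hQA hsne
      (by rw [numComponents_Icc hbs]; omega) (by rw [numComponents_Icc hbs]; omega) ?_
    · show mnZ (lastCol (Q ∪ colCell (maxX Q + 1) (Finset.Icc b (b + (h : ℤ) - 1)))) = b
      rw [hrec.2.2.2.1, mnZ_Icc hbs]
    · intro y hy
      rw [Finset.mem_Icc] at hy
      refine ⟨max b m', Finset.mem_Icc.2 ⟨by omega, by omega⟩, ?_, ?_⟩
      · refine ⟨Finset.mem_Icc.2 ⟨hy.1, hy.2⟩, Finset.mem_Icc.2 ⟨by omega, by omega⟩, ?_⟩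
        intro c hc1 hc2
        rw [Finset.mem_Icc]
        omega
      · exact shadow hQch (by omega) (by omega)

lemma card_Tf {n h : ℕ} (hh : 1 ≤ h) :
    (Tf n h).card = ∑ k' ∈ Finset.range (n + 2), (aFin (n - h) k').card * (h + k') := by
  rw [Finset.card_eq_sum_card_fiberwise Tf_mapsTo]
  rw [Finset.sum_congr rfl (fun Q hQ => fiber_full hh hQ)]
  rw [← Finset.sum_fiberwise_of_maps_to (g := fun Q => heightN (lastCol Q))
    (t := Finset.range (n + 2)) ?_ (fun Q => h + heightN (lastCol Q))]
  · apply Finset.sum_congr rfl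
    intro k' _
    rw [Finset.sum_congr rfl (fun Q hQ => by rw [(Finset.mem_filter.1 hQ).2]),
      Finset.sum_const, aFinAll_filter_height, smul_eq_mul, mul_comm]
  · intro Q hQ
    rw [mem_aFinAll] at hQ
    have h1 := heightN_lastCol_le hQ.1
    rw [hQ.2.2] at h1
    simp only [Finset.mem_range]
    omega
/-! #### Fibers: the gapped-column case -/

lemma Tg_mapsTo {n h : ℕ} : ∀ P ∈ Tg n h, prefixP P ∈ aFinAll (n + 1 - h) := by
  intro P hP
  rw [Tg, Finset.mem_filter, mem_aFin] at hP
  obtain ⟨⟨hch, hA, hcard, hht⟩, hmx, hgap⟩ := hP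
  obtain ⟨h1, h2, _, _, h5⟩ := prefix_facts hch hA hmx
  rw [mem_aFinAll]
  refine ⟨h1, h2, ?_⟩
  have hlne : (lastCol P).Nonempty := col_maxX_nonempty hch.1.1
  rcases lastCol_structure hch with hIcc | ⟨g, hg1, hg2, hIccE⟩
  · exfalso
    apply hgap
    have : gapCells (lastCol P) = gapCells (Finset.Icc (mnZ (lastCol P)) (mxZ (lastCol P))) := by
      conv_lhs => rw [hIcc]
    rw [this]
    exact gapCells_Icc (by
      have := heightN_cast hlne
      have := heightN_pos hlne
      omega)
  · have hcast := heightN_cast hlne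
    rw [hht] at hcast
    have hlcard : (lastCol P).card = h - 1 := by
      have : (lastCol P).card = (Finset.Icc (mnZ (lastCol P)) (mxZ (lastCol P)) \ {g}).card := by
        conv_lhs => rw [hIccE]
      rw [this, card_IccE hg1 hg2]
      omega
    have hh3 : 3 ≤ h := by omega
    omega

lemma fiber_gap {n h : ℕ} {Q : Finset Cell} (hQ : Q ∈ aFinAll (n + 1 - h)) :
    ((Tg n h).filter (fun P => prefixP P = Q)).card
      = (h - 2) * (heightN (lastCol Q) - 1) := by
  rw [mem_aFinAll] at hQ
  obtain ⟨hQch, hQA, hQcard⟩ := hQ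
  have hQne : Q.Nonempty := hQch.1.1
  have hQpos : 1 ≤ n + 1 - h := hQcard ▸ Finset.card_pos.2 hQne
  have hQlne : (lastCol Q).Nonempty := col_maxX_nonempty hQne
  set m' := mnZ (lastCol Q) with hm'
  set M' := mxZ (lastCol Q) with hM'
  have hk' : (heightN (lastCol Q) : ℤ) = M' - m' + 1 := heightN_cast hQlne
  have hmm : m' ≤ M' := by
    have := heightN_pos hQlne
    omega
  have hXQ : 0 ≤ maxX Q := anchored_maxX_nonneg hQA
  rw [Finset.card_bij' (i := fun P _ => (mnZ (gapCells (lastCol P)) - mnZ (lastCol P),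
      mnZ (gapCells (lastCol P))))
    (j := fun p _ => Q ∪ colCell (maxX Q + 1)
      (Finset.Icc (p.2 - p.1) (p.2 - p.1 + (h : ℤ) - 1) \ {p.2}))
    (t := (Finset.Icc (1 : ℤ) ((h : ℤ) - 2)) ×ˢ (Finset.Icc (m' + 1) M')) ?_ ?_ ?_ ?_,
    Finset.card_product, card_Icc_int, card_Icc_int]
  · have e1 : ((h : ℤ) - 2 + 1 - 1).toNat = h - 2 := by omega
    have e2 : (M' + 1 - (m' + 1)).toNat = heightN (lastCol Q) - 1 := by omega
    rw [e1, e2]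
  · -- i maps into the product
    intro P hP
    show (mnZ (gapCells (lastCol P)) - mnZ (lastCol P), mnZ (gapCells (lastCol P)))
      ∈ (Finset.Icc (1 : ℤ) ((h : ℤ) - 2)) ×ˢ (Finset.Icc (m' + 1) M')
    rw [Finset.mem_filter, Tg, Finset.mem_filter, mem_aFin] at hP
    obtain ⟨⟨⟨hch, hA, hcard, hht⟩, hmx, hgap⟩, hpre⟩ := hP
    have hlne : (lastCol P).Nonempty := col_maxX_nonempty hch.1.1
    rcases lastCol_structure hch with hIcc | ⟨g, hg1, hg2, hIccE⟩
    · exfalso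
      apply hgap
      have : gapCells (lastCol P) = gapCells (Finset.Icc (mnZ (lastCol P)) (mxZ (lastCol P))) := by
        conv_lhs => rw [hIcc]
      rw [this]
      exact gapCells_Icc (by
        have h1 := heightN_cast hlne
        have h2 := heightN_pos hlne
        omega)
    · have hcast := heightN_cast hlne
      rw [hht] at hcast
      have hgc : gapCells (lastCol P) = {g} := by
        have : gapCells (lastCol P)
            = gapCells (Finset.Icc (mnZ (lastCol P)) (mxZ (lastCol P)) \ {g}) := by
          conv_lhs => rw [hIccE]
        rw [this, gapCells_IccE hg1 hg2]
      rw [hgc, mnZ_singleton]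
      obtain ⟨_, _, hmaxQ, hlastQ, _⟩ := prefix_facts hch hA hmx
      rw [hpre] at hmaxQ hlastQ
      have hcolne : (columnYs P (maxX P - 1)).Nonempty := by
        rw [← hlastQ]; exact hQlne
      have hstep := hch.2.1.2 (maxX P - 1) hcolne
        (by rw [show maxX P - 1 + 1 = maxX P by omega]; exact hlne)
      rw [show maxX P - 1 + 1 = maxX P by omega] at hstep
      have hmem_iff : ∀ y : ℤ, y ∈ columnYs P (maxX P) ↔
          (mnZ (lastCol P) ≤ y ∧ y ≤ mxZ (lastCol P) ∧ y ≠ g) := by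
        intro y
        rw [show columnYs P (maxX P) = lastCol P from rfl]
        conv_lhs => rw [hIccE]
        simp only [Finset.mem_sdiff, Finset.mem_Icc, Finset.mem_singleton, and_assoc]
      -- bottom component
      obtain ⟨b1, hb1, hsc1, c1, hc1, hadj1⟩ := hstep (mnZ (lastCol P))
        (by rw [hmem_iff]; omega)
      rw [hmem_iff] at hb1
      have hb1top : b1 ≤ g - 1 := by
        by_contra hcon
        push_neg at hcon
        have := hsc1.2.2 g (by omega) (by omega)
        rw [hmem_iff] at this
        omega
      have hc1b : m' ≤ c1 ∧ c1 ≤ M' := ⟨mnZ_le hQlne (hlastQ ▸ hc1), le_mxZ hQlne (hlastQ ▸ hc1)⟩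
      have hadj1' : b1 = c1 ∨ b1 = c1 + 1 := by
        have hd := hexAdj_snd_of_dx1 hadj1 (by simp only []; omega)
        simpa using hd
      -- top component
      obtain ⟨b2, hb2, hsc2, c2, hc2, hadj2⟩ := hstep (mxZ (lastCol P))
        (by rw [hmem_iff]; omega)
      rw [hmem_iff] at hb2
      have hb2bot : g + 1 ≤ b2 := by
        by_contra hcon
        push_neg at hcon
        have := hsc2.2.2 g (by omega) (by omega)
        rw [hmem_iff] at this
        omega
      have hc2b : m' ≤ c2 ∧ c2 ≤ M' := ⟨mnZ_le hQlne (hlastQ ▸ hc2), le_mxZ hQlne (hlastQ ▸ hc2)⟩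
      have hadj2' : b2 = c2 ∨ b2 = c2 + 1 := by
        have hd := hexAdj_snd_of_dx1 hadj2 (by simp only []; omega)
        simpa using hd
      rw [Finset.mem_product, Finset.mem_Icc, Finset.mem_Icc]
      constructor <;> constructor <;> omega
  · -- j maps into the fiber
    rintro ⟨a, g⟩ hp
    rw [Finset.mem_product, Finset.mem_Icc, Finset.mem_Icc] at hp
    obtain ⟨⟨ha1, ha2⟩, hg1, hg2⟩ := hp
    have hint1 : g - a < g := by omega
    have hint2 : g < g - a + (h : ℤ) - 1 := by omega
    have hint2' : g < g - a + ((h : ℤ) - 1) := by omega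
    have hsne : (Finset.Icc (g - a) (g - a + (h : ℤ) - 1) \ {g}).Nonempty := by
      have := IccE_nonempty (b := g - a + (h : ℤ) - 1) hint1 (by omega)
      exact this
    have hmem_s : ∀ y : ℤ, y ∈ Finset.Icc (g - a) (g - a + (h : ℤ) - 1) \ {g} ↔
        (g - a ≤ y ∧ y ≤ g - a + (h : ℤ) - 1 ∧ y ≠ g) := by
      intro y
      simp only [Finset.mem_sdiff, Finset.mem_Icc, Finset.mem_singleton, and_assoc]
    have hrec := reconstruct hQch hQA hsne
      (by rw [numComponents_Icc_erase hint1 (by omega)])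
      (by intro _; rw [gapSize_IccE hint1 (by omega)]) ?_
    · obtain ⟨h1, h2, h3, h4, h5, h6⟩ := hrec
      rw [Finset.mem_filter, Tg, Finset.mem_filter, mem_aFin]
      refine ⟨⟨⟨h1, h2, ?_, ?_⟩, by rw [h3]; omega, ?_⟩, h5⟩
      · rw [h6, card_IccE hint1 (by omega), hQcard]
        omega
      · rw [h4, heightN_IccE hint1 (by omega)]
        omega
      · rw [h4, gapCells_IccE hint1 (by omega)]
        simp
    · -- meeting condition
      intro y hy
      rw [hmem_s] at hy
      by_cases hyb : y ≤ g - 1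
      · -- bottom component
        refine ⟨max y m', ?_, ?_, ?_⟩
        · rw [hmem_s]; omega
        · refine ⟨by rw [hmem_s]; omega, by rw [hmem_s]; omega, ?_⟩
          intro c hcc1 hcc2
          rw [hmem_s]
          omega
        · exact shadow hQch (by omega) (by omega)
      · -- top component
        refine ⟨g + 1, ?_, ?_, ?_⟩
        · rw [hmem_s]; omega
        · refine ⟨by rw [hmem_s]; omega, by rw [hmem_s]; omega, ?_⟩
          intro c hcc1 hcc2
          rw [hmem_s]
          omega
        · exact shadow hQch (by omega) (by omega)
  · -- left inverse
    intro P hP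
    rw [Finset.mem_filter, Tg, Finset.mem_filter, mem_aFin] at hP
    obtain ⟨⟨⟨hch, hA, hcard, hht⟩, hmx, hgap⟩, hpre⟩ := hP
    have hlne : (lastCol P).Nonempty := col_maxX_nonempty hch.1.1
    rcases lastCol_structure hch with hIcc | ⟨g, hg1, hg2, hIccE⟩
    · exfalso
      apply hgap
      have : gapCells (lastCol P) = gapCells (Finset.Icc (mnZ (lastCol P)) (mxZ (lastCol P))) := by
        conv_lhs => rw [hIcc]
      rw [this]
      exact gapCells_Icc (by
        have h1 := heightN_cast hlne
        have h2 := heightN_pos hlne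
        omega)
    · have hcast := heightN_cast hlne
      rw [hht] at hcast
      have hgc : gapCells (lastCol P) = {g} := by
        have : gapCells (lastCol P)
            = gapCells (Finset.Icc (mnZ (lastCol P)) (mxZ (lastCol P)) \ {g}) := by
          conv_lhs => rw [hIccE]
        rw [this, gapCells_IccE hg1 hg2]
      obtain ⟨_, _, hmaxQ, _, _⟩ := prefix_facts hch hA hmx
      rw [hpre] at hmaxQ
      show Q ∪ colCell (maxX Q + 1)
        (Finset.Icc (mnZ (gapCells (lastCol P)) - (mnZ (gapCells (lastCol P)) - mnZ (lastCol P)))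
          (mnZ (gapCells (lastCol P)) - (mnZ (gapCells (lastCol P)) - mnZ (lastCol P)) + (h : ℤ) - 1)
          \ {mnZ (gapCells (lastCol P))}) = P
      rw [hgc, mnZ_singleton]
      have hxx : maxX Q + 1 = maxX P := by omega
      have hIcc2 : Finset.Icc (g - (g - mnZ (lastCol P))) (g - (g - mnZ (lastCol P)) + (h : ℤ) - 1)
        \ {g} = lastCol P := by
        conv_rhs => rw [hIccE]
        congr 2
        · omega
        · omega
      rw [hxx, hIcc2, ← hpre]
      exact (eq_prefix_union_lastCol).symm
  · -- right inverse
    rintro ⟨a, g⟩ hp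
    rw [Finset.mem_product, Finset.mem_Icc, Finset.mem_Icc] at hp
    obtain ⟨⟨ha1, ha2⟩, hg1, hg2⟩ := hp
    have hint1 : g - a < g := by omega
    have hsne : (Finset.Icc (g - a) (g - a + (h : ℤ) - 1) \ {g}).Nonempty :=
      IccE_nonempty hint1 (by omega)
    have hrec := reconstruct hQch hQA hsne
      (by rw [numComponents_Icc_erase hint1 (by omega)])
      (by intro _; rw [gapSize_IccE hint1 (by omega)]) ?_
    · show (mnZ (gapCells (lastCol (Q ∪ colCell (maxX Q + 1)
          (Finset.Icc (g - a) (g - a + (h : ℤ) - 1) \ {g}))))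
        - mnZ (lastCol (Q ∪ colCell (maxX Q + 1)
          (Finset.Icc (g - a) (g - a + (h : ℤ) - 1) \ {g}))),
        mnZ (gapCells (lastCol (Q ∪ colCell (maxX Q + 1)
          (Finset.Icc (g - a) (g - a + (h : ℤ) - 1) \ {g}))))) = (a, g)
      rw [hrec.2.2.2.1, gapCells_IccE hint1 (by omega), mnZ_singleton, mnZ_IccE hint1 (by omega)]
      rw [Prod.mk.injEq]
      constructor <;> omega
    · intro y hy
      have hmem_s : ∀ z : ℤ, z ∈ Finset.Icc (g - a) (g - a + (h : ℤ) - 1) \ {g} ↔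
          (g - a ≤ z ∧ z ≤ g - a + (h : ℤ) - 1 ∧ z ≠ g) := by
        intro z
        simp only [Finset.mem_sdiff, Finset.mem_Icc, Finset.mem_singleton, and_assoc]
      rw [hmem_s] at hy
      by_cases hyb : y ≤ g - 1
      · refine ⟨max y m', ?_, ?_, ?_⟩
        · rw [hmem_s]; omega
        · refine ⟨by rw [hmem_s]; omega, by rw [hmem_s]; omega, ?_⟩
          intro c hcc1 hcc2
          rw [hmem_s]
          omega
        · exact shadow hQch (by omega) (by omega)
      · refine ⟨g + 1, ?_, ?_, ?_⟩
        · rw [hmem_s]; omega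
        · refine ⟨by rw [hmem_s]; omega, by rw [hmem_s]; omega, ?_⟩
          intro c hcc1 hcc2
          rw [hmem_s]
          omega
        · exact shadow hQch (by omega) (by omega)

lemma card_Tg {n h : ℕ} :
    (Tg n h).card = (h - 2) * ∑ k' ∈ Finset.range (n + 3), (aFin (n + 1 - h) k').card * (k' - 1) := by
  rw [Finset.card_eq_sum_card_fiberwise Tg_mapsTo]
  rw [Finset.sum_congr rfl (fun Q hQ => fiber_gap hQ)]
  rw [← Finset.sum_fiberwise_of_maps_to (g := fun Q => heightN (lastCol Q))
    (t := Finset.range (n + 3)) ?_ (fun Q => (h - 2) * (heightN (lastCol Q) - 1))]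
  · rw [Finset.mul_sum]
    apply Finset.sum_congr rfl
    intro k' _
    rw [Finset.sum_congr rfl (fun Q hQ => by rw [(Finset.mem_filter.1 hQ).2]),
      Finset.sum_const, aFinAll_filter_height, smul_eq_mul]
    ring
  · intro Q hQ
    rw [mem_aFinAll] at hQ
    have h1 := heightN_lastCol_le hQ.1
    rw [hQ.2.2] at h1
    simp only [Finset.mem_range]
    omega
/-! #### Single-column polyominoes and the recurrence -/

lemma columnYs_colCell {X x : ℤ} {s : Finset ℤ} :
    columnYs (colCell X s) x = if x = X then s else ∅ := by
  split_ifs with hx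
  · subst hx
    ext y
    rw [mem_columnYs, mem_colCell]
    tauto
  · rw [columnYs_eq_empty_iff]
    intro y hy
    rw [mem_colCell] at hy
    exact hx hy.1

lemma bar_facts {n : ℕ} (hn : 1 ≤ n) :
    colCell 0 (Finset.Icc 0 ((n : ℤ) - 1)) ∈ aFin n n ∧
      maxX (colCell 0 (Finset.Icc 0 ((n : ℤ) - 1))) = 0 := by
  have hbs : (0 : ℤ) ≤ (n : ℤ) - 1 := by omega
  have hsne : (Finset.Icc (0 : ℤ) ((n : ℤ) - 1)).Nonempty := ⟨0, Finset.mem_Icc.2 ⟨le_refl _, hbs⟩⟩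
  set B := colCell 0 (Finset.Icc 0 ((n : ℤ) - 1)) with hB
  have hcol : ∀ x : ℤ, columnYs B x = if x = 0 then Finset.Icc 0 ((n : ℤ) - 1) else ∅ :=
    fun x => columnYs_colCell
  have hBne : B.Nonempty := by
    refine ⟨((0 : ℤ), (0 : ℤ)), ?_⟩
    rw [hB, mem_colCell]
    exact ⟨rfl, Finset.mem_Icc.2 ⟨le_refl _, hbs⟩⟩
  have hmaxB : maxX B = 0 := by
    apply maxX_eq
    · rw [hcol 0, if_pos rfl]
      exact hsne
    · intro x hx
      rw [hcol x, if_neg (by omega)]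
  have hA : AnchoredC B := by
    refine ⟨?_, ?_, ?_⟩
    · rintro ⟨x, y⟩ hc
      rw [hB, mem_colCell] at hc
      simp only []
      omega
    · rw [hcol 0, if_pos rfl]
      exact Finset.mem_Icc.2 ⟨le_refl _, hbs⟩
    · intro y hy
      rw [hcol 0, if_pos rfl, Finset.mem_Icc] at hy
      exact hy.1
  have hpoly : IsPolyomino B := by
    apply isPolyomino_of_cols hBne hA.1 ?_ ?_ ?_
    · rintro ⟨cx, cy⟩ hc x hx1 hx2
      rw [hB, mem_colCell] at hc
      have : x = 0 := by simp only [] at hx2; omega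
      rw [this, hcol 0, if_pos rfl]
      exact hsne
    · rw [hcol 0, if_pos rfl]
      exact numComponents_Icc hbs
    · intro x hx0 hne1
      exfalso
      rw [hcol (x+1), if_neg (by omega)] at hne1
      exact Finset.not_nonempty_empty hne1
  have hch : IsCheesy 1 B := by
    refine ⟨hpoly, ⟨?_, ?_⟩, ?_⟩
    · intro x hx hall
      have hx0 : x = 0 := leftmost_zero hA hx hall
      rw [hx0, hcol 0, if_pos rfl]
      exact numComponents_Icc hbs
    · intro x hx hx1 b hb
      exfalso
      rcases eq_or_ne (x + 1) 0 with heq | hne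
      · rw [hcol x, if_neg (by omega)] at hx
        exact Finset.not_nonempty_empty hx
      · rw [hcol (x+1), if_neg hne] at hx1
        exact Finset.not_nonempty_empty hx1
    · intro x
      rw [hcol x]
      split_ifs with hx
      · rw [numComponents_Icc hbs]
        exact ⟨by omega, by omega⟩
      · rw [numComponents_empty]
        exact ⟨by omega, by omega⟩
  refine ⟨mem_aFin.2 ⟨hch, hA, ?_, ?_⟩, hmaxB⟩
  · rw [hB, colCell, Finset.card_image_of_injective _ (fun a b hab => (Prod.ext_iff.1 hab).2),
      card_Icc_int]
    omega
  · rw [lastCol, hmaxB, hcol 0, if_pos rfl, heightN_Icc hbs]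
    omega

lemma card_single {n h : ℕ} :
    ((aFin n h).filter (fun P => ¬ 1 ≤ maxX P)).card = if n = h ∧ 1 ≤ n then 1 else 0 := by
  have hset : (aFin n h).filter (fun P => ¬ 1 ≤ maxX P)
      = if n = h ∧ 1 ≤ n then {colCell 0 (Finset.Icc 0 ((n : ℤ) - 1))} else ∅ := by
    ext P
    rw [Finset.mem_filter, mem_aFin]
    split_ifs with hcond
    · rw [Finset.mem_singleton]
      constructor
      · rintro ⟨⟨hch, hA, hcard, hht⟩, hmx⟩
        have hmax0 : maxX P = 0 := le_antisymm (by omega) (anchored_maxX_nonneg hA)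
        -- P is contained in column 0
        have hallx : ∀ c ∈ P, c.1 = 0 := by
          intro c hc
          have h1 := hA.1 c hc
          have h2 := cell_le_maxX hc
          omega
        have hPcol : P = colCell 0 (columnYs P 0) := by
          ext ⟨x, y⟩
          rw [mem_colCell, mem_columnYs]
          constructor
          · intro hc
            have := hallx _ hc
            simp only [] at this
            subst this
            exact ⟨rfl, hc⟩
          · rintro ⟨rfl, hc⟩
            exact hc
        have hc0ne : (columnYs P 0).Nonempty := ⟨0, hA.2.1⟩
        have hnc : numComponents (columnYs P 0) = 1 := by
          apply hch.2.1.1 0 hc0ne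
          intro x' hx'
          exact anchored_col_neg hA hx'
        have hIcc := eq_Icc_of_numComponents_one hc0ne hnc
        have hmn : (columnYs P 0).min' hc0ne = 0 :=
          le_antisymm (Finset.min'_le _ _ hA.2.1) (Finset.le_min' _ _ _ hA.2.2)
        have hcardcol : (columnYs P 0).card = n := by
          rw [← hcard]
          conv_rhs => rw [hPcol]
          rw [colCell, Finset.card_image_of_injective _ (fun a b hab => (Prod.ext_iff.1 hab).2)]
        have hmx' : (columnYs P 0).max' hc0ne = (n : ℤ) - 1 := by
          have hcc : (columnYs P 0).card
              = ((columnYs P 0).max' hc0ne + 1 - (columnYs P 0).min' hc0ne).toNat := by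
            conv_lhs => rw [hIcc]
            exact card_Icc_int
          rw [hcardcol, hmn] at hcc
          have hge := Finset.min'_le _ _ ((columnYs P 0).max'_mem hc0ne)
          rw [hmn] at hge
          omega
        rw [hPcol]
        congr 1
        rw [hIcc, hmn, hmx']
      · intro hP
        subst hP
        obtain ⟨hmem, hmax⟩ := bar_facts hcond.2
        rw [mem_aFin] at hmem
        refine ⟨⟨hmem.1, hmem.2.1, ?_, ?_⟩, by rw [hmax]; omega⟩
        · rw [hmem.2.2.1]
        · rw [hmem.2.2.2, hcond.1]
    · simp only [Finset.notMem_empty, iff_false]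
      rintro ⟨⟨hch, hA, hcard, hht⟩, hmx⟩
      have hmax0 : maxX P = 0 := le_antisymm (by omega) (anchored_maxX_nonneg hA)
      have hne : P.Nonempty := hch.1.1
      have hn1 : 1 ≤ n := by
        rw [← hcard]
        exact Finset.card_pos.2 hne
      -- n = h must hold: the unique column is an interval of size n and height n
      apply hcond
      refine ⟨?_, hn1⟩
      have hc0ne : (columnYs P 0).Nonempty := ⟨0, hA.2.1⟩
      have hnc : numComponents (columnYs P 0) = 1 := by
        apply hch.2.1.1 0 hc0ne
        intro x' hx'
        exact anchored_col_neg hA hx'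
      have hIcc := eq_Icc_of_numComponents_one hc0ne hnc
      have hallx : ∀ c ∈ P, c.1 = 0 := by
        intro c hc
        have h1 := hA.1 c hc
        have h2 := cell_le_maxX hc
        omega
      have hPcol : P = colCell 0 (columnYs P 0) := by
        ext ⟨x, y⟩
        rw [mem_colCell, mem_columnYs]
        constructor
        · intro hc
          have := hallx _ hc
          simp only [] at this
          subst this
          exact ⟨rfl, hc⟩
        · rintro ⟨rfl, hc⟩
          exact hc
      have hcardcol : (columnYs P 0).card = n := by
        rw [← hcard]
        conv_rhs => rw [hPcol]
        rw [colCell, Finset.card_image_of_injective _ (fun a b hab => (Prod.ext_iff.1 hab).2)]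
      have hhtn : heightN (columnYs P 0) = n := by
        rw [heightN_eq hc0ne]
        have hcc : (columnYs P 0).card = ((columnYs P 0).max' hc0ne + 1
            - (columnYs P 0).min' hc0ne).toNat := by
          conv_lhs => rw [hIcc]
          exact card_Icc_int
        omega
      rw [← hht, lastCol, hmax0, hhtn]
  rw [hset]
  split_ifs
  · exact Finset.card_singleton _
  · exact Finset.card_empty

/-- The master recurrence for level-1 cheesy polyomino counts. -/
theorem cheesy_rec (n h : ℕ) (hh : 1 ≤ h) :
    c1CountHt n h = (if n = h then 1 else 0)
      + ∑ k' ∈ Finset.range (n + 2), c1CountHt (n - h) k' * (h + k')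
      + (h - 2) * ∑ k' ∈ Finset.range (n + 3), c1CountHt (n + 1 - h) k' * (k' - 1) := by
  have hsplit1 := Finset.card_filter_add_card_filter_not
    (s := aFin n h) (p := fun P => 1 ≤ maxX P)
  have hsplit2 := Finset.card_filter_add_card_filter_not
    (s := (aFin n h).filter (fun P => 1 ≤ maxX P)) (p := fun P => gapCells (lastCol P) = ∅)
  have hTf : ((aFin n h).filter (fun P => 1 ≤ maxX P)).filter
      (fun P => gapCells (lastCol P) = ∅) = Tf n h := by
    rw [Finset.filter_filter, Tf]
  have hTg : ((aFin n h).filter (fun P => 1 ≤ maxX P)).filter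
      (fun P => ¬ gapCells (lastCol P) = ∅) = Tg n h := by
    rw [Finset.filter_filter, Tg]
  rw [c1CountHt_eq_aFin, ← hsplit1, ← hsplit2, hTf, hTg, card_single, card_Tf hh, card_Tg]
  have hif : (if n = h ∧ 1 ≤ n then 1 else 0) = (if n = h then 1 else 0) := by
    split_ifs with h1 h2 <;> omega
  rw [hif]
  have e1 : ∀ k', (aFin (n - h) k').card = c1CountHt (n - h) k' :=
    fun k' => (c1CountHt_eq_aFin _ _).symm
  have e2 : ∀ k', (aFin (n + 1 - h) k').card = c1CountHt (n + 1 - h) k' :=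
    fun k' => (c1CountHt_eq_aFin _ _).symm
  simp only [e1, e2]
  ring
/-! #### Generating function algebra -/

def cc (n k : ℕ) : ℚ := (c1CountHt n k : ℚ)

def s0 (m : ℕ) : ℚ := ∑ k ∈ Finset.range (m + 2), cc m k

def s1 (m : ℕ) : ℚ := ∑ k ∈ Finset.range (m + 2), (k : ℚ) * cc m k

lemma cc_eq_zero {n k : ℕ} (h : n < k) : cc n k = 0 := by
  rw [cc, c1CountHt_ht_gt n k h, Nat.cast_zero]

lemma cc_zero_right (n : ℕ) : cc n 0 = 0 := by
  rw [cc, c1CountHt_ht_zero, Nat.cast_zero]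

lemma cc_zero_left (k : ℕ) : cc 0 k = 0 := by
  rw [cc, c1CountHt_area_zero, Nat.cast_zero]

/-- ℚ-version of the recurrence. -/
lemma rec_q (m h : ℕ) (hh : 1 ≤ h) :
    cc (m + h) h = (if m = 0 then 1 else 0) + ((h : ℚ) * s0 m + s1 m)
      + ((h - 2 : ℕ) : ℚ) * (s1 (m + 1) - s0 (m + 1)) := by
  have hrec := cheesy_rec (m + h) h hh
  rw [Nat.add_sub_cancel] at hrec
  rw [show m + h + 1 - h = m + 1 by omega] at hrec
  have e0 : (if m + h = h then (1:ℕ) else 0) = (if m = 0 then 1 else 0) := by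
    split_ifs <;> omega
  rw [e0] at hrec
  -- shrink the first sum
  have e1 : ∑ k ∈ Finset.range (m + h + 2), c1CountHt m k * (h + k)
      = ∑ k ∈ Finset.range (m + 2), c1CountHt m k * (h + k) := by
    symm
    apply Finset.sum_subset
    · intro k hk
      rw [Finset.mem_range] at hk
      exact Finset.mem_range.2 (by omega)
    · intro k _ hk
      rw [Finset.mem_range] at hk
      rw [c1CountHt_ht_gt m k (by omega)]
      ring
  have e2 : ∑ k ∈ Finset.range (m + h + 3), c1CountHt (m + 1) k * (k - 1)
      = ∑ k ∈ Finset.range (m + 3), c1CountHt (m + 1) k * (k - 1) := by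
    symm
    apply Finset.sum_subset
    · intro k hk
      rw [Finset.mem_range] at hk
      exact Finset.mem_range.2 (by omega)
    · intro k _ hk
      rw [Finset.mem_range] at hk
      rw [c1CountHt_ht_gt (m + 1) k (by omega)]
      ring
  rw [e1, e2] at hrec
  have hcast := congrArg (fun x : ℕ => (x : ℚ)) hrec
  simp only [Nat.cast_add, Nat.cast_mul, Nat.cast_sum, Nat.cast_ite, Nat.cast_one,
    Nat.cast_zero] at hcast
  rw [cc, hcast]
  congr 1
  congr 1
  · -- first sum
    rw [s0, s1, Finset.mul_sum, ← Finset.sum_add_distrib]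
    apply Finset.sum_congr rfl
    intro k _
    rw [cc]
    push_cast
    ring
  · -- second sum
    congr 1
    rw [s0, s1]
    rw [show (m + 1) + 2 = m + 3 from rfl, ← Finset.sum_sub_distrib]
    apply Finset.sum_congr rfl
    intro k _
    rw [cc]
    rcases Nat.eq_zero_or_pos k with rfl | hk
    · rw [c1CountHt_ht_zero]
      push_cast
      ring
    · have : ((k - 1 : ℕ) : ℚ) = (k : ℚ) - 1 := by
        have : (1:ℕ) ≤ k := hk
        push_cast [this]
        ring
      rw [this]
      ring

lemma coeff_Cser (n j : ℕ) : (PowerSeries.coeff (R := Polynomial ℚ) n Cser).coeff j = cc n j := by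
  rw [Cser, PowerSeries.coeff_mk, Polynomial.finset_sum_coeff]
  by_cases hj : j < n + 2
  · rw [Finset.sum_eq_single j]
    · rw [Polynomial.coeff_C_mul, Polynomial.coeff_X_pow, if_pos rfl, mul_one, cc]
    · intro k _ hk
      rw [Polynomial.coeff_C_mul, Polynomial.coeff_X_pow, if_neg (fun h => hk h.symm), mul_zero]
    · intro h
      exact absurd (Finset.mem_range.2 hj) h
  · rw [Finset.sum_eq_zero, cc_eq_zero (by omega)]
    intro k hk
    rw [Finset.mem_range] at hk
    rw [Polynomial.coeff_C_mul, Polynomial.coeff_X_pow, if_neg (by omega), mul_zero]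

lemma coeff_C1 (m : ℕ) : PowerSeries.coeff (R := ℚ) m C1 = s0 m := by
  rw [C1, PowerSeries.coeff_mk, Cser, PowerSeries.coeff_mk, Polynomial.eval_finset_sum, s0]
  apply Finset.sum_congr rfl
  intro k _
  rw [Polynomial.eval_mul, Polynomial.eval_C, Polynomial.eval_pow, Polynomial.eval_X, one_pow,
    mul_one, cc]

lemma coeff_D1 (m : ℕ) : PowerSeries.coeff (R := ℚ) m D1 = s1 m := by
  rw [D1, PowerSeries.coeff_mk, Cser, PowerSeries.coeff_mk, map_sum, Polynomial.eval_finset_sum, s1]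
  apply Finset.sum_congr rfl
  intro k _
  rw [Polynomial.derivative_C_mul_X_pow, Polynomial.eval_mul, Polynomial.eval_C,
    Polynomial.eval_pow, Polynomial.eval_X, one_pow, mul_one, cc]
  ring

lemma tp_pow_mul (b : ℕ) (F : PowerSeries (Polynomial ℚ)) (n : ℕ) :
    PowerSeries.coeff n (tp ^ b * F)
      = PowerSeries.coeff n F * Polynomial.X ^ b := by
  rw [tp, ← map_pow, PowerSeries.coeff_C_mul, mul_comm]

lemma coeff_qtF (a b : ℕ) (F : PowerSeries (Polynomial ℚ)) (n : ℕ) :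
    PowerSeries.coeff n (qp ^ a * tp ^ b * F)
      = if a ≤ n then PowerSeries.coeff (n - a) F * Polynomial.X ^ b else 0 := by
  rw [qp, mul_assoc, PowerSeries.coeff_X_pow_mul']
  split_ifs with h
  · rw [tp_pow_mul]
  · rfl
/-! #### Specialized recurrences -/

def eQ (m : ℕ) : ℚ := if m = 0 then 1 else 0

lemma s0_zero : s0 0 = 0 := by
  rw [s0]
  apply Finset.sum_eq_zero
  intro k _
  exact cc_zero_left k

lemma s1_zero : s1 0 = 0 := by
  rw [s1]
  apply Finset.sum_eq_zero
  intro k _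
  rw [cc_zero_left k, mul_zero]

lemma rec1 (m : ℕ) : cc (m + 1) 1 = eQ m + s0 m + s1 m := by
  have := rec_q m 1 (le_refl _)
  rw [show (1 - 2 : ℕ) = 0 by omega] at this
  rw [this, eQ]
  push_cast
  ring

lemma rec2 (m : ℕ) : cc (m + 2) 2 = eQ m + 2 * s0 m + s1 m := by
  have := rec_q m 2 (by omega)
  rw [show (2 - 2 : ℕ) = 0 by omega] at this
  rw [this, eQ]
  push_cast
  ring

lemma rech (m i : ℕ) : cc (m + (i + 3)) (i + 3)
    = eQ m + ((i : ℚ) + 3) * s0 m + s1 m + ((i : ℚ) + 1) * (s1 (m + 1) - s0 (m + 1)) := by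
  have := rec_q m (i + 3) (by omega)
  rw [show (i + 3 - 2 : ℕ) = i + 1 by omega] at this
  rw [this, eQ]
  push_cast
  ring

lemma rec3 (m : ℕ) : cc (m + 3) 3
    = eQ m + 3 * s0 m + s1 m + (s1 (m + 1) - s0 (m + 1)) := by
  have := rech m 0
  rw [this]
  push_cast
  ring

lemma key1 (m : ℕ) : cc (m + 2) 1 = s0 (m + 1) + s1 (m + 1) := by
  rw [show m + 2 = (m + 1) + 1 from rfl, rec1 (m + 1), eQ, if_neg (by omega)]
  ring

lemma key2 (m : ℕ) : cc (m + 2) 2 - 2 * cc (m + 1) 1 + cc m 0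
    = -(eQ m) - s1 m := by
  rw [rec2 m, rec1 m, cc_zero_right]
  ring

lemma key3 (m : ℕ) : cc (m + 2) 3 + cc m 1 + s0 m = 2 * cc (m + 1) 2 + s1 m := by
  rcases m with _ | p
  · rw [cc_eq_zero (by omega), cc_eq_zero (by omega), cc_eq_zero (by omega), s0_zero, s1_zero]
    ring
  · rw [show p + 1 + 2 = p + 3 from rfl, rec3 p, show p + 1 + 1 = p + 2 from rfl, rec2 p,
      rec1 p]
    ring

lemma keyj (m j : ℕ) : cc (m + 2) (j + 4) + cc m (j + 2) = 2 * cc (m + 1) (j + 3) := by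
  rcases Nat.lt_or_ge m (j + 2) with hm | hm
  · rw [cc_eq_zero (by omega), cc_eq_zero (by omega), cc_eq_zero (by omega)]
    ring
  · obtain ⟨p, rfl⟩ : ∃ p, m = p + (j + 2) := ⟨m - (j + 2), by omega⟩
    have h1 : p + (j + 2) + 2 = p + (j + 1 + 3) := by omega
    have h2 : p + (j + 2) + 1 = p + (j + 3) := by omega
    have h3 : j + 4 = (j + 1) + 3 := by omega
    rw [h1, h3, rech p (j + 1), h2, show j + 3 = j + 3 from rfl]
    rcases j with _ | q
    · rw [show p + (0 + 2) = p + 2 from rfl, rec2 p, show p + (0 + 3) = p + (0 + 3) from rfl,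
        rech p 0]
      push_cast
      ring
    · rw [show p + (q + 1 + 2) = p + (q + 3) from rfl, rech p q,
        show q + 1 + 3 = q + 1 + 3 from rfl, rech p (q + 1)]
      push_cast
      ring
lemma coeff_liftP (F : PowerSeries ℚ) (n : ℕ) :
    PowerSeries.coeff n (liftP F) = Polynomial.C (PowerSeries.coeff (R := ℚ) n F) :=
  PowerSeries.coeff_map _ _ _

lemma cc11 : cc 1 1 = 1 := by
  have := rec1 0
  rw [s0_zero, s1_zero, eQ, if_pos rfl] at this
  rw [this]
  ring

lemma coeff0_Cser : PowerSeries.coeff (R := Polynomial ℚ) 0 Cser = 0 := by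
  apply Polynomial.ext
  intro j
  rw [coeff_Cser, cc_zero_left, Polynomial.coeff_zero]

lemma coeff1_Cser : PowerSeries.coeff (R := Polynomial ℚ) 1 Cser = Polynomial.X := by
  apply Polynomial.ext
  intro j
  rw [coeff_Cser]
  rcases j with _ | j
  · rw [cc_zero_right]
    simp
  rcases j with _ | j
  · rw [cc11, Polynomial.coeff_X_one]
  · rw [cc_eq_zero (by omega), Polynomial.coeff_X]
    rw [if_neg (by omega)]

lemma polyid (m : ℕ) :
    (PowerSeries.coeff (R := Polynomial ℚ) (m+2)) Cser
        - ((PowerSeries.coeff (R := Polynomial ℚ) (m+1)) Cser * Polynomial.X ^ 1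
          + (PowerSeries.coeff (R := Polynomial ℚ) (m+1)) Cser * Polynomial.X ^ 1)
        + (PowerSeries.coeff (R := Polynomial ℚ) m) Cser * Polynomial.X ^ 2
      = (-if m = 0 then Polynomial.X ^ 2 else 0)
        + Polynomial.C (s0 (m+1)) * Polynomial.X ^ 1
        + (Polynomial.C (s1 (m+1)) * Polynomial.X ^ 1 - Polynomial.C (s1 m) * Polynomial.X ^ 2)
        + (Polynomial.C (s1 m) - Polynomial.C (s0 m)) * Polynomial.X ^ 3 := by
  apply Polynomial.ext
  intro j
  have hifc : (-if m = 0 then (Polynomial.X : Polynomial ℚ) ^ 2 else 0).coeff j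
      = -(eQ m * (if j = 2 then 1 else 0)) := by
    by_cases hm : m = 0 <;> by_cases hj : j = 2 <;>
      simp [hm, hj, eQ, Polynomial.coeff_X_pow]
  simp only [Polynomial.coeff_add, Polynomial.coeff_sub, hifc,
    Polynomial.coeff_mul_X_pow', Polynomial.coeff_C_mul, Polynomial.coeff_X_pow,
    sub_mul, coeff_Cser]
  rcases j with _ | j
  · norm_num [cc_zero_right]
  rcases j with _ | j
  · norm_num [cc_zero_right]
    have := key1 m
    rw [show m + 1 + 1 = m + 2 from rfl]
    linarith
  rcases j with _ | j
  · norm_num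
    have := key2 m
    rw [show m + 1 + 1 = m + 2 from rfl]
    linarith
  rcases j with _ | j
  · norm_num
    have := key3 m
    rw [show m + 1 + 1 = m + 2 from rfl]
    linarith
  · norm_num [show ¬ (j + 4 = 2) by omega, show ¬ (j + 4 = 3) by omega,
      show j + 4 - 1 = j + 3 by omega, show j + 4 - 2 = j + 2 by omega,
      show j + 4 - 3 = j + 1 by omega]
    have := keyj m j
    rw [show m + 1 + 1 = m + 2 from rfl]
    linarith

theorem stmt_12' :
    (1 - qp * tp) ^ 2 * Cser
      = qp * tp * (1 - qp * tp) + qp * tp * liftP C1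
        + qp * tp * (1 - qp * tp) * liftP D1
        + qp ^ 2 * tp ^ 3 * liftP (D1 - C1) := by
  have hL : (1 - qp * tp) ^ 2 * Cser
      = Cser - (qp ^ 1 * tp ^ 1 * Cser + qp ^ 1 * tp ^ 1 * Cser) + qp ^ 2 * tp ^ 2 * Cser := by
    ring
  have hR : qp * tp * (1 - qp * tp) + qp * tp * liftP C1 + qp * tp * (1 - qp * tp) * liftP D1
      + qp ^ 2 * tp ^ 3 * liftP (D1 - C1)
      = (qp ^ 1 * tp ^ 1 * 1 - qp ^ 2 * tp ^ 2 * 1) + qp ^ 1 * tp ^ 1 * liftP C1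
        + (qp ^ 1 * tp ^ 1 * liftP D1 - qp ^ 2 * tp ^ 2 * liftP D1)
        + qp ^ 2 * tp ^ 3 * liftP (D1 - C1) := by
    ring
  rw [hL, hR]
  apply PowerSeries.ext
  intro n
  simp only [map_add, map_sub, coeff_qtF, coeff_liftP, coeff_C1, coeff_D1,
    PowerSeries.coeff_one, map_one]
  rcases n with _ | n
  · norm_num
    rw [← PowerSeries.coeff_zero_eq_constantCoeff_apply, coeff0_Cser]
  rcases n with _ | m
  · norm_num
    rw [← PowerSeries.coeff_zero_eq_constantCoeff_apply, coeff0_Cser, coeff1_Cser,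
      s0_zero, s1_zero]
    simp
  · norm_num [show m + 1 + 1 - 2 = m from by omega]
    have := polyid m
    rw [show m + 1 + 1 = m + 2 from rfl]
    linear_combination this
/-- The functional equation
`(1 − qt)²·C = qt(1 − qt) + qt·C₁ + qt(1 − qt)·D₁ + q²t³·(D₁ − C₁)`
in `(ℚ[t])⟦q⟧`. -/
theorem stmt_12 :
    (1 - qp * tp) ^ 2 * Cser
      = qp * tp * (1 - qp * tp) + qp * tp * liftP C1
        + qp * tp * (1 - qp * tp) * liftP D1
        + qp ^ 2 * tp ^ 3 * liftP (D1 - C1) := by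
  exact stmt_12'
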